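/- arXiv:1209.1363 — 8 statements merged into one kernel-verified Lean document; each statement's English description precedes it below -/
import Mathlib

section
/- Let (a_n)_{n≥1} be a real sequence with nonnegative Boolean transform, and let (w_n)_{n≥1} be a weakly decreasing real sequence with w_1 ≤ 1. Then every coefficient of the formal power series 1 − (1 + ∑_{n≥1} w_n a_n x^n)/(1 + ∑_{n≥1} a_n x^n) is nonnegative. -/
open PowerSeries Finset

private lemma sum_Ico_reflect' (n : ℕ) (f : ℕ → ℝ) :
    ∑ k ∈ Finset.Ico 1 n, f k = ∑ k ∈ Finset.Ico 1 n, f (n - k) := by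
  refine Finset.sum_nbij' (fun k => n - k) (fun k => n - k) ?_ ?_ ?_ ?_ ?_ <;>
    intro k hk <;> simp only [Finset.mem_Ico] at * <;>
      first
        | omega
        | (congr 1; omega)

/-- coefficient of a product of two series with zero constant term, as Ico sum -/
private lemma coeff_mul_mk (f g : ℕ → ℝ) (hf : f 0 = 0) (hg : g 0 = 0) (n : ℕ) :
    PowerSeries.coeff n (PowerSeries.mk f * PowerSeries.mk g)
      = ∑ k ∈ Finset.Ico 1 n, f (n - k) * g k := by
  rw [PowerSeries.coeff_mul, Finset.Nat.sum_antidiagonal_eq_sum_range_succ_mk]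
  simp only [PowerSeries.coeff_mk]
  rw [Finset.range_eq_Ico]
  rcases Nat.eq_zero_or_pos n with h | h
  · subst h; simp [hf]
  rw [← Finset.sum_Ico_consecutive _ (by omega : 0 ≤ 1) (by omega : 1 ≤ n + 1),
    ← Finset.sum_Ico_consecutive _ (by omega : 1 ≤ n) (by omega : n ≤ n + 1)]
  have h0 : ∑ i ∈ Finset.Ico 0 1, f i * g (n - i) = 0 := by
    apply Finset.sum_eq_zero; intro i hi
    simp only [Finset.mem_Ico] at hi
    have : i = 0 := by omega
    simp [this, hf]
  have hn : ∑ i ∈ Finset.Ico n (n+1), f i * g (n - i) = 0 := by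
    apply Finset.sum_eq_zero; intro i hi
    simp only [Finset.mem_Ico] at hi
    have : i = n := by omega
    simp [this, hg]
  rw [h0, hn, zero_add, add_zero, sum_Ico_reflect' n (fun i => f i * g (n - i))]
  apply Finset.sum_congr rfl
  intro k hk
  simp only [Finset.mem_Ico] at hk
  have h2 : n - (n - k) = k := by omega
  rw [h2]

/-- If the real sequence `(a n)` has nonnegative Boolean transform
`(b n)`, and `(w n)_{n≥1}` is weakly decreasing with `w 1 ≤ 1`, then every coefficient
of `1 - (1 + ∑_{n≥1} w n * a n * xⁿ) / (1 + ∑_{n≥1} a n * xⁿ)` in `ℝ[[x]]`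
is nonnegative. -/
theorem coeff_nonneg_of_boolean_transform_nonneg (a b w : ℕ → ℝ)
    (hb : ∀ n, 1 ≤ n → b n = a n - ∑ k ∈ Finset.Ico 1 n, a (n - k) * b k)
    (hb0 : ∀ n, 1 ≤ n → 0 ≤ b n)
    (hw : ∀ m n, 1 ≤ m → m ≤ n → w n ≤ w m) (hw1 : w 1 ≤ 1) :
    ∀ n, 0 ≤ PowerSeries.coeff n
      (1 - (1 + PowerSeries.mk fun i => if i = 0 then 0 else w i * a i) *
        (1 + PowerSeries.mk fun i => if i = 0 then 0 else a i)⁻¹) := by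
  -- a is nonnegative on positive indices
  have ha : ∀ n, 1 ≤ n → 0 ≤ a n := by
    intro n
    induction n using Nat.strong_induction_on with
    | _ n ih =>
      intro hn
      have han : a n = b n + ∑ k ∈ Finset.Ico 1 n, a (n - k) * b k := by
        have := hb n hn; linarith
      have h1 : 0 ≤ ∑ k ∈ Finset.Ico 1 n, a (n - k) * b k := by
        apply Finset.sum_nonneg
        intro k hk
        rw [Finset.mem_Ico] at hk
        exact mul_nonneg (ih (n - k) (by omega) (by omega)) (hb0 k hk.1)
      have := hb0 n hn
      linarith
  set a' : ℕ → ℝ := fun i => if i = 0 then 0 else a i with ha'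
  set wa' : ℕ → ℝ := fun i => if i = 0 then 0 else w i * a i with hwa'
  set b' : ℕ → ℝ := fun i => if i = 0 then 0 else b i with hb'
  set A : PowerSeries ℝ := 1 + PowerSeries.mk a' with hA
  set W : PowerSeries ℝ := PowerSeries.mk wa' with hW
  set B : PowerSeries ℝ := PowerSeries.mk b' with hB
  have hAinv : A⁻¹ = 1 - B := by
    rw [eq_comm, PowerSeries.eq_inv_iff_mul_eq_one]
    · ext n
      rcases Nat.eq_zero_or_pos n with h | h
      · subst h; simp [hA, hB, hb', ha']
      · have hmul : (1 - B) * A = 1 + PowerSeries.mk a' - PowerSeries.mk b'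
            - PowerSeries.mk b' * PowerSeries.mk a' := by
          rw [hA, hB]; ring
        rw [hmul]
        simp only [map_sub, map_add, PowerSeries.coeff_mk]
        rw [coeff_mul_mk b' a' (by simp [hb']) (by simp [ha']),
          PowerSeries.coeff_one, if_neg (by omega)]
        have hbn := hb n h
        have hsum : ∑ k ∈ Finset.Ico 1 n, b' (n - k) * a' k
            = ∑ k ∈ Finset.Ico 1 n, a (n - k) * b k := by
          rw [sum_Ico_reflect' n (fun k => b' (n-k) * a' k)]
          apply Finset.sum_congr rfl
          intro k hk
          simp only [Finset.mem_Ico] at hk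
          have h1 : n - (n - k) = k := by omega
          simp only [hb', ha', h1, if_neg (by omega : ¬ (n - k) = 0),
            if_neg (by omega : ¬ k = 0)]
          ring
        rw [hsum]
        simp only [ha', hb', if_neg (by omega : ¬ n = 0)]
        linarith
    · simp [hA, ha']
  intro n
  rw [hAinv]
  have hF : (1 : PowerSeries ℝ) - (1 + W) * (1 - B) = B - W + W * B := by ring
  rw [hF, hW, hB]
  simp only [map_add, map_sub]
  rw [coeff_mul_mk wa' b' (by simp [hwa']) (by simp [hb'])]
  rcases Nat.eq_zero_or_pos n with h | h
  · subst h; simp [hwa', hb', PowerSeries.coeff_zero_eq_constantCoeff]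
  simp only [PowerSeries.coeff_mk, hwa', hb', if_neg (by omega : ¬ n = 0)]
  -- now goal: 0 ≤ b n - w n * a n + ∑ k ∈ Ico 1 n, wa' (n-k) * b' k
  have hsum : ∑ k ∈ Finset.Ico 1 n, (if n - k = 0 then 0 else w (n-k) * a (n-k)) *
      (if k = 0 then 0 else b k) = ∑ k ∈ Finset.Ico 1 n, w (n-k) * a (n-k) * b k := by
    apply Finset.sum_congr rfl
    intro k hk
    simp only [Finset.mem_Ico] at hk
    rw [if_neg (by omega), if_neg (by omega)]
  rw [hsum]
  have han : a n = b n + ∑ k ∈ Finset.Ico 1 n, a (n - k) * b k := by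
    have := hb n h; linarith
  have key : b n - w n * a n + ∑ k ∈ Finset.Ico 1 n, w (n-k) * a (n-k) * b k
      = (1 - w n) * b n + ∑ k ∈ Finset.Ico 1 n, (w (n-k) - w n) * (a (n-k) * b k) := by
    rw [han]
    rw [Finset.sum_congr rfl (fun k _ => by ring :
      ∀ k ∈ Finset.Ico 1 n, (w (n-k) - w n) * (a (n-k) * b k)
        = w (n-k) * a (n-k) * b k - w n * (a (n-k) * b k)),
      Finset.sum_sub_distrib, ← Finset.mul_sum]
    ring
  rw [key]
  have h1 : 0 ≤ (1 - w n) * b n := by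
    apply mul_nonneg _ (hb0 n h)
    have := hw 1 n le_rfl h
    linarith
  have h2 : 0 ≤ ∑ k ∈ Finset.Ico 1 n, (w (n-k) - w n) * (a (n-k) * b k) := by
    apply Finset.sum_nonneg
    intro k hk
    simp only [Finset.mem_Ico] at hk
    apply mul_nonneg
    · have := hw (n-k) n (by omega) (by omega); linarith
    · exact mul_nonneg (ha (n-k) (by omega)) (hb0 k hk.1)
  linarith
end

section
/- Let (a_n)_{n≥1} be a real sequence with nonnegative Boolean transform, and let (w_n)_{n≥1} be a weakly decreasing real sequence with w_1 ≤ 1. Then every coefficient of the formal power series (1 + ∑_{n≥1} a_n x^n)/(1 + ∑_{n≥1} w_n a_n x^n) is nonnegative. -/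
open Finset

noncomputable def fW (q : ℕ → ℝ) : ℕ → ℝ
  | 0 => 1
  | (n+1) => ∑ k ∈ (Finset.Ico 1 (n+2)).attach, (-q k.1) * fW q (n + 1 - k.1)
decreasing_by
  have := Finset.mem_Ico.mp k.2; omega

lemma fW_spec (q : ℕ → ℝ) (n : ℕ) (h : 1 ≤ n) :
    fW q n = -∑ k ∈ Finset.Ico 1 (n+1), q k * fW q (n - k) := by
  obtain ⟨m, rfl⟩ : ∃ m, n = m + 1 := ⟨n - 1, by omega⟩
  rw [fW, ← Finset.sum_attach (Finset.Ico 1 (m+2)) (fun k => q k * fW q (m + 1 - k))]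
  simp [neg_mul, Finset.sum_neg_distrib]

lemma fW_nonneg (q : ℕ → ℝ) (hq : ∀ k, 1 ≤ k → q k ≤ 0) : ∀ n, 0 ≤ fW q n := by
  intro n
  induction n using Nat.strong_induction_on with
  | _ n ih =>
    match n with
    | 0 => simp [fW]
    | (m+1) =>
      rw [fW]
      apply Finset.sum_nonneg
      intro k hk
      have hk2 := Finset.mem_Ico.mp k.2
      have := hq k.1 hk2.1
      have := ih (m + 1 - k.1) (by omega)
      nlinarith

lemma coeff_mk_mul_mk (x y : ℕ → ℝ) (n : ℕ) :
    (PowerSeries.coeff (R := ℝ) n) (PowerSeries.mk x * PowerSeries.mk y) =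
      ∑ k ∈ Finset.range (n+1), x k * y (n - k) := by
  rw [PowerSeries.coeff_mul, Finset.Nat.sum_antidiagonal_eq_sum_range_succ_mk]
  simp

lemma sum_split (F : ℕ → ℝ) (n : ℕ) (h : 1 ≤ n) :
    ∑ k ∈ Finset.range (n+1), F k = F 0 + (∑ k ∈ Finset.Ico 1 n, F k) + F n := by
  rw [Finset.range_eq_Ico, Finset.sum_eq_sum_Ico_succ_bot (by omega),
    Finset.sum_Ico_succ_top (by omega)]
  ring

lemma sum_reflect (F : ℕ → ℕ → ℝ) (n : ℕ) :
    ∑ k ∈ Finset.Ico 1 n, F (n - k) k = ∑ k ∈ Finset.Ico 1 n, F k (n - k) := by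
  apply Finset.sum_nbij' (fun k => n - k) (fun k => n - k) <;>
    intro k hk <;> simp only [Finset.mem_Ico] at * <;> first | omega | (congr 1 <;> omega)

/-- If the real sequence `(a n)` has nonnegative Boolean transform
`(b n)`, and `(w n)_{n≥1}` is weakly decreasing with `w 1 ≤ 1`, then every coefficient
of `(1 + ∑_{n≥1} a n * xⁿ) / (1 + ∑_{n≥1} w n * a n * xⁿ)` in `ℝ[[x]]`
is nonnegative. -/
theorem coeff_nonneg_of_boolean_transform_nonneg' (a b w : ℕ → ℝ)
    (hb : ∀ n, 1 ≤ n → b n = a n - ∑ k ∈ Finset.Ico 1 n, a (n - k) * b k)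
    (hb0 : ∀ n, 1 ≤ n → 0 ≤ b n)
    (hw : ∀ m n, 1 ≤ m → m ≤ n → w n ≤ w m) (hw1 : w 1 ≤ 1) :
    ∀ n, 0 ≤ PowerSeries.coeff (R := ℝ) n
      ((1 + PowerSeries.mk fun i => if i = 0 then 0 else a i) *
        (1 + PowerSeries.mk fun i => if i = 0 then 0 else w i * a i)⁻¹) := by
  -- reflected form of the recursion
  have hb' : ∀ n, 1 ≤ n → a n = b n + ∑ k ∈ Finset.Ico 1 n, a k * b (n - k) := by
    intro n hn
    have := hb n hn
    rw [← sum_reflect (fun i j => a i * b j) n]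
    linarith
  -- nonnegativity of a
  have ha : ∀ n, 1 ≤ n → 0 ≤ a n := by
    intro n
    induction n using Nat.strong_induction_on with
    | _ n ih =>
      intro hn
      rw [hb' n hn]
      have : 0 ≤ ∑ k ∈ Finset.Ico 1 n, a k * b (n - k) := by
        apply Finset.sum_nonneg
        intro k hk
        have hk2 := Finset.mem_Ico.mp hk
        exact mul_nonneg (ih k (by omega) hk2.1) (hb0 (n - k) (by omega))
      linarith [hb0 n hn]
  -- the coefficient sequences
  set abar : ℕ → ℝ := fun n => if n = 0 then 1 else a n with habar
  set vbar : ℕ → ℝ := fun n => if n = 0 then 1 else -b n with hvbar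
  set wbar : ℕ → ℝ := fun n => if n = 0 then 1 else w n * a n with hwbar
  have hA : (1 + PowerSeries.mk fun i => if i = 0 then 0 else a i) = PowerSeries.mk abar := by
    ext n
    simp only [map_add, PowerSeries.coeff_one, PowerSeries.coeff_mk, habar]
    by_cases h : n = 0 <;> simp [h]
  have hWe : (1 + PowerSeries.mk fun i => if i = 0 then 0 else w i * a i)
      = PowerSeries.mk wbar := by
    ext n
    simp only [map_add, PowerSeries.coeff_one, PowerSeries.coeff_mk, hwbar]
    by_cases h : n = 0 <;> simp [h]
  -- A * V = 1
  have hAV : PowerSeries.mk abar * PowerSeries.mk vbar = 1 := by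
    ext n
    rw [coeff_mk_mul_mk]
    rcases Nat.eq_zero_or_pos n with h | h
    · subst h; simp [habar, hvbar]
    · rw [sum_split _ n h, PowerSeries.coeff_one, if_neg (by omega)]
      simp only [Nat.sub_zero, Nat.sub_self]
      have h1 : abar 0 * vbar n = -b n := by
        show (if (0:ℕ) = 0 then (1:ℝ) else a 0) * (if n = 0 then (1:ℝ) else -b n) = -b n
        rw [if_pos rfl, if_neg (by omega), one_mul]
      have h2 : abar n * vbar 0 = a n := by
        show (if n = 0 then (1:ℝ) else a n) * (if (0:ℕ) = 0 then (1:ℝ) else -b 0) = a n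
        rw [if_pos rfl, if_neg (by omega), mul_one]
      have h3 : ∑ k ∈ Finset.Ico 1 n, abar k * vbar (n - k)
          = -∑ k ∈ Finset.Ico 1 n, a k * b (n - k) := by
        rw [← Finset.sum_neg_distrib]
        apply Finset.sum_congr rfl
        intro k hk
        have hk2 := Finset.mem_Ico.mp hk
        show (if k = 0 then (1:ℝ) else a k) * (if n - k = 0 then (1:ℝ) else -b (n - k))
            = -(a k * b (n - k))
        rw [if_neg (by omega), if_neg (by omega)]
        ring
      rw [h1, h2, h3]
      have := hb' n h
      linarith
  -- Q = W * V and its coefficients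
  set q : ℕ → ℝ := fun n => ∑ k ∈ Finset.range (n + 1), wbar k * vbar (n - k) with hqdef
  have hQ : PowerSeries.mk wbar * PowerSeries.mk vbar = PowerSeries.mk q := by
    ext n
    rw [coeff_mk_mul_mk, PowerSeries.coeff_mk]
  have hq0 : q 0 = 1 := by simp [hqdef, habar, hvbar, hwbar]
  have hqle : ∀ n, 1 ≤ n → q n ≤ 0 := by
    intro n hn
    have h1 : wbar 0 * vbar n = -b n := by
      show (if (0:ℕ) = 0 then (1:ℝ) else w 0 * a 0) * (if n = 0 then (1:ℝ) else -b n) = -b n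
      rw [if_pos rfl, if_neg (by omega), one_mul]
    have h2 : wbar n * vbar 0 = w n * a n := by
      show (if n = 0 then (1:ℝ) else w n * a n) * (if (0:ℕ) = 0 then (1:ℝ) else -b 0)
          = w n * a n
      rw [if_pos rfl, if_neg (by omega), mul_one]
    have h3 : ∑ k ∈ Finset.Ico 1 n, wbar k * vbar (n - k)
        = -∑ k ∈ Finset.Ico 1 n, w k * (a k * b (n - k)) := by
      rw [← Finset.sum_neg_distrib]
      apply Finset.sum_congr rfl
      intro k hk
      have hk2 := Finset.mem_Ico.mp hk
      show (if k = 0 then (1:ℝ) else w k * a k) * (if n - k = 0 then (1:ℝ) else -b (n - k))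
          = -(w k * (a k * b (n - k)))
      rw [if_neg (by omega), if_neg (by omega)]
      ring
    have hqn : q n = -b n - ∑ k ∈ Finset.Ico 1 n, w k * (a k * b (n - k)) + w n * a n := by
      show ∑ k ∈ Finset.range (n + 1), wbar k * vbar (n - k)
          = -b n - ∑ k ∈ Finset.Ico 1 n, w k * (a k * b (n - k)) + w n * a n
      rw [sum_split _ n hn]
      simp only [Nat.sub_zero, Nat.sub_self]
      rw [h1, h2, h3]
      ring
    have hwn1 : w n ≤ 1 := le_trans (hw 1 n le_rfl hn) hw1
    have key : w n * a n ≤ b n + ∑ k ∈ Finset.Ico 1 n, w k * (a k * b (n - k)) := by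
      have e : w n * a n = w n * b n + ∑ k ∈ Finset.Ico 1 n, w n * (a k * b (n - k)) := by
        rw [hb' n hn, mul_add, Finset.mul_sum]
      rw [e]
      have t1 : w n * b n ≤ b n := by nlinarith [hb0 n hn]
      have t2 : ∑ k ∈ Finset.Ico 1 n, w n * (a k * b (n - k))
          ≤ ∑ k ∈ Finset.Ico 1 n, w k * (a k * b (n - k)) := by
        apply Finset.sum_le_sum
        intro k hk
        have hk2 := Finset.mem_Ico.mp hk
        exact mul_le_mul_of_nonneg_right (hw k n hk2.1 (by omega))
          (mul_nonneg (ha k hk2.1) (hb0 (n - k) (by omega)))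
      linarith
    linarith
  -- F * Q = 1
  set f : ℕ → ℝ := fW q with hfdef
  have hFQ : PowerSeries.mk q * PowerSeries.mk f = 1 := by
    ext n
    rw [coeff_mk_mul_mk]
    rcases Nat.eq_zero_or_pos n with h | h
    · subst h; simp [hq0, hfdef, fW]
    · rw [PowerSeries.coeff_one, if_neg (by omega)]
      have e1 : ∑ k ∈ Finset.range (n + 1), q k * f (n - k)
          = f n + ∑ k ∈ Finset.Ico 1 (n + 1), q k * f (n - k) := by
        rw [Finset.range_eq_Ico, Finset.sum_eq_sum_Ico_succ_bot (by omega)]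
        simp [hq0]
      rw [e1, hfdef, fW_spec q n h]
      ring
  -- invertibility of W
  have hWc : PowerSeries.constantCoeff (R := ℝ) (PowerSeries.mk wbar) ≠ 0 := by
    simp [hwbar, PowerSeries.constantCoeff_mk]
  have hWinv : PowerSeries.mk wbar * (PowerSeries.mk wbar)⁻¹ = 1 :=
    PowerSeries.mul_inv_cancel _ hWc
  -- A = F * W
  have hAFW : PowerSeries.mk abar = PowerSeries.mk f * PowerSeries.mk wbar := by
    calc PowerSeries.mk abar = PowerSeries.mk abar * (PowerSeries.mk q * PowerSeries.mk f) := by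
          rw [hFQ, mul_one]
      _ = PowerSeries.mk f * PowerSeries.mk wbar
            * (PowerSeries.mk abar * PowerSeries.mk vbar) := by rw [← hQ]; ring
      _ = PowerSeries.mk f * PowerSeries.mk wbar := by rw [hAV, mul_one]
  intro n
  rw [hA, hWe, hAFW, mul_assoc, hWinv, mul_one, PowerSeries.coeff_mk]
  exact fW_nonneg q hqle n
end

section
/- Let (a_n)_{n≥1} and (w_n)_{n≥1} be arbitrary real sequences, let (b_n)_{n≥1} be the Boolean transform of (a_n), and let c_n denote the n-th coefficient of the formal power series 1 − (1 + ∑_{n≥1} w_n a_n x^n)/(1 + ∑_{n≥1} a_n x^n). Then for every n ≥ 1, c_n = ∑_{k=1}^{n−1} (w_{n−k} − w_n) a_{n−k} b_k + (1 − w_n) b_n. -/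
open PowerSeries Finset

lemma coeff_mul_aux (f g : ℕ → ℝ) (m : ℕ) :
    PowerSeries.coeff (R := ℝ) m ((PowerSeries.mk fun i => if i = 0 then 0 else f i) *
      (PowerSeries.mk fun i => if i = 0 then 0 else g i)) =
    ∑ k ∈ Finset.Ico 1 m, f (m - k) * g k := by
  rw [PowerSeries.coeff_mul, Finset.Nat.sum_antidiagonal_eq_sum_range_succ_mk]
  simp only [coeff_mk]
  have step : ∑ i ∈ Finset.range (m + 1),
      (if i = 0 then (0:ℝ) else f i) * (if m - i = 0 then 0 else g (m - i))
      = ∑ i ∈ Finset.Ico 1 m, f i * g (m - i) := by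
    rw [eq_comm]
    apply Finset.sum_subset_zero_on_sdiff
    · intro x hx
      simp only [Finset.mem_Ico, Finset.mem_range] at *
      omega
    · intro x hx
      simp only [Finset.mem_sdiff, Finset.mem_range, Finset.mem_Ico, not_and, not_le] at hx
      rcases Nat.eq_zero_or_pos x with h0 | hpos
      · simp [h0]
      · have hxm : m - x = 0 := by omega
        simp [hxm]
    · intro x hx
      simp only [Finset.mem_Ico] at hx
      rw [if_neg (by omega), if_neg (by omega)]
  rw [step]
  apply Finset.sum_nbij' (fun k => m - k) (fun k => m - k)
  all_goals intro x hx
  all_goals simp only [Finset.mem_Ico] at *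
  · omega
  · omega
  · omega
  · omega
  · have : m - (m - x) = x := by omega
    rw [this]

/-- Let `(b n)` be the Boolean transform of `(a n)`, `(w n)` an
arbitrary real sequence, and let `c n` be the `n`-th coefficient of
`1 - (1 + ∑_{n≥1} w n * a n * xⁿ) / (1 + ∑_{n≥1} a n * xⁿ)`. Then for every `n ≥ 1`,
`c n = ∑_{k=1}^{n-1} (w (n-k) - w n) * a (n-k) * b k + (1 - w n) * b n`. -/
theorem coeff_formula_boolean_transform (a b w : ℕ → ℝ)
    (hb : ∀ n, 1 ≤ n → b n = a n - ∑ k ∈ Finset.Ico 1 n, a (n - k) * b k) :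
    ∀ n, 1 ≤ n →
      PowerSeries.coeff (R := ℝ) n
        (1 - (1 + PowerSeries.mk fun i => if i = 0 then 0 else w i * a i) *
          (1 + PowerSeries.mk fun i => if i = 0 then 0 else a i)⁻¹)
      = ∑ k ∈ Finset.Ico 1 n, (w (n - k) - w n) * a (n - k) * b k + (1 - w n) * b n := by
  intro n hn
  set Ma : PowerSeries ℝ := PowerSeries.mk fun i => if i = 0 then 0 else a i with hMa
  set Wa : PowerSeries ℝ := PowerSeries.mk fun i => if i = 0 then 0 else w i * a i with hWa
  set B : PowerSeries ℝ := PowerSeries.mk fun i => if i = 0 then 0 else b i with hB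
  set A : PowerSeries ℝ := 1 + Ma with hA
  have hc0 : PowerSeries.constantCoeff (R := ℝ) A ≠ 0 := by
    simp [hA, hMa, PowerSeries.constantCoeff_mk]
  have hne : A ≠ 0 := fun h => hc0 (by simp [h])
  have hAB : A * B = Ma := by
    ext m
    rw [hA, add_mul, one_mul, map_add]
    rw [show Ma * B = (PowerSeries.mk fun i => if i = 0 then 0 else a i) *
      (PowerSeries.mk fun i => if i = 0 then 0 else b i) from rfl, coeff_mul_aux]
    rcases Nat.eq_zero_or_pos m with h0 | hpos
    · simp [h0, hB, hMa]
    · have h1 : 1 ≤ m := hpos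
      simp only [hB, hMa, coeff_mk, if_neg (by omega : ¬ m = 0)]
      have := hb m h1
      linarith [this]
  have key : 1 - (1 + Wa) * A⁻¹ = B - Wa + Wa * B := by
    apply mul_right_cancel₀ hne
    rw [sub_mul, one_mul, mul_assoc, PowerSeries.inv_mul_cancel A hc0, mul_one]
    have hBA : B * A = Ma := by rw [mul_comm]; exact hAB
    rw [add_mul, sub_mul, mul_assoc, hBA]
    rw [hA]; ring
  rw [key]
  rw [map_add, map_sub]
  have hWB : PowerSeries.coeff (R := ℝ) n (Wa * B) = ∑ k ∈ Finset.Ico 1 n, (w (n-k) * a (n-k)) * b k :=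
    coeff_mul_aux (fun i => w i * a i) b n
  rw [hWB]
  simp only [hB, hWa, coeff_mk, if_neg (by omega : ¬ n = 0)]
  have hs := hb n hn
  have expand : ∑ k ∈ Finset.Ico 1 n, (w (n - k) - w n) * a (n - k) * b k
      = (∑ k ∈ Finset.Ico 1 n, w (n-k) * a (n-k) * b k)
        - w n * ∑ k ∈ Finset.Ico 1 n, a (n-k) * b k := by
    rw [Finset.mul_sum, ← Finset.sum_sub_distrib]
    apply Finset.sum_congr rfl
    intro x hx; ring
  rw [expand]
  have : ∑ k ∈ Finset.Ico 1 n, a (n-k) * b k = a n - b n := by linarith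
  rw [this]
  ring
end

section
/- Let (a_n)_{n≥1} be a real sequence with nonnegative Boolean transform. Then a_s · a_t ≤ a_{s+t} for all integers s, t ≥ 1. -/
/-- If the real sequence `(a n)` has nonnegative Boolean transform
`(b n)`, then `a s * a t ≤ a (s + t)` for all `s, t ≥ 1`. -/
theorem submultiplicative_of_boolean_transform_nonneg (a b : ℕ → ℝ)
    (hb : ∀ n, 1 ≤ n → b n = a n - ∑ k ∈ Finset.Ico 1 n, a (n - k) * b k)
    (hb0 : ∀ n, 1 ≤ n → 0 ≤ b n) :
    ∀ s t, 1 ≤ s → 1 ≤ t → a s * a t ≤ a (s + t) := by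
  have ha : ∀ n, 1 ≤ n → a n = b n + ∑ k ∈ Finset.Ico 1 n, a (n - k) * b k := by
    intro n hn
    have := hb n hn
    linarith
  have ha0 : ∀ n, 1 ≤ n → 0 ≤ a n := by
    intro n
    induction n using Nat.strong_induction_on with
    | _ n ih =>
      intro hn
      rw [ha n hn]
      have hsum : 0 ≤ ∑ k ∈ Finset.Ico 1 n, a (n - k) * b k := by
        apply Finset.sum_nonneg
        intro k hk
        simp only [Finset.mem_Ico] at hk
        exact mul_nonneg (ih (n - k) (by omega) (by omega)) (hb0 k hk.1)
      linarith [hb0 n hn]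
  intro s t hs
  induction t using Nat.strong_induction_on with
  | _ t ih =>
    intro ht
    have key : ∑ k ∈ Finset.Ico 1 (t + 1), a (s + t - k) * b k ≤ a (s + t) := by
      rw [ha (s + t) (by omega)]
      have h1 : ∑ k ∈ Finset.Ico 1 (t + 1), a (s + t - k) * b k ≤
          ∑ k ∈ Finset.Ico 1 (s + t), a (s + t - k) * b k := by
        apply Finset.sum_le_sum_of_subset_of_nonneg
        · exact Finset.Ico_subset_Ico le_rfl (by omega)
        · intro k hk _
          simp only [Finset.mem_Ico] at hk
          exact mul_nonneg (ha0 (s + t - k) (by omega)) (hb0 k hk.1)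
      linarith [hb0 (s + t) (by omega)]
    refine le_trans ?_ key
    rw [Finset.sum_Ico_succ_top (by omega : 1 ≤ t)]
    have hst : s + t - t = s := by omega
    rw [hst]
    have h2 : ∀ k ∈ Finset.Ico 1 t, a s * (a (t - k) * b k) ≤ a (s + t - k) * b k := by
      intro k hk
      simp only [Finset.mem_Ico] at hk
      have heq : a (s + t - k) = a (s + (t - k)) := by congr 1; omega
      have hih := ih (t - k) (by omega) (by omega)
      have hm := mul_le_mul_of_nonneg_right hih (hb0 k hk.1)
      rw [heq]
      nlinarith [hm]
    have expand : a s * a t =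
        (∑ k ∈ Finset.Ico 1 t, a s * (a (t - k) * b k)) + a s * b t := by
      rw [ha t ht, mul_add, Finset.mul_sum]
      ring
    rw [expand]
    exact add_le_add (Finset.sum_le_sum fun k hk => by
      have := h2 k hk
      linarith [h2 k hk]) le_rfl
end

section
/- Let (a_n)_{n≥1} and (b_n)_{n≥1} be real sequences with Boolean transforms (p_n)_{n≥1} and (q_n)_{n≥1} respectively, and let (r_n)_{n≥1} be the Boolean transform of the Hadamard product sequence (a_n b_n)_{n≥1}. Then for every n ≥ 1, r_n = ∑ p_α q_β, where the sum is over all pairs (α, β) of compositions of n such that PS(α) ∩ PS(β) = ∅, i.e., such that α ∧ β = (n). -/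
open scoped Classical

/-- `j` is a prefix sum ("cut") of the list `l`. -/
def LCut (l : List ℕ) (j : ℕ) : Prop := ∃ i, (l.take i).sum = j

theorem lcut_zero (l : List ℕ) : LCut l 0 := ⟨0, rfl⟩

theorem lcut_sum (l : List ℕ) : LCut l l.sum := ⟨l.length, by simp⟩

theorem lcut_le {l : List ℕ} {j : ℕ} (h : LCut l j) : j ≤ l.sum := by
  obtain ⟨i, rfl⟩ := h
  conv_rhs => rw [← List.take_append_drop i l]
  rw [List.sum_append]
  exact Nat.le_add_right _ _

theorem lcut_append {l₁ l₂ : List ℕ} {j : ℕ} :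
    LCut (l₁ ++ l₂) j ↔ LCut l₁ j ∨ ∃ j', LCut l₂ j' ∧ j = l₁.sum + j' := by
  constructor
  · rintro ⟨i, rfl⟩
    rw [List.take_append, List.sum_append]
    rcases le_or_gt i l₁.length with h | h
    · left
      refine ⟨i, ?_⟩
      have : i - l₁.length = 0 := Nat.sub_eq_zero_of_le h
      simp [this]
    · right
      have : l₁.take i = l₁ := List.take_of_length_le h.le
      exact ⟨(l₂.take (i - l₁.length)).sum, ⟨_, rfl⟩, by rw [this]⟩
  · rintro (⟨i, rfl⟩ | ⟨j', ⟨i, rfl⟩, rfl⟩)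
    · refine ⟨min i l₁.length, ?_⟩
      rw [List.take_append]
      have h1 : min i l₁.length - l₁.length = 0 := by omega
      have h2 : l₁.take (min i l₁.length) = l₁.take i := by
        conv_rhs => rw [← List.take_length (l := l₁), List.take_take]
      simp [h1, h2]
    · refine ⟨l₁.length + i, ?_⟩
      rw [List.take_append, List.take_of_length_le (Nat.le_add_right _ _),
        Nat.add_sub_cancel_left, List.sum_append]

theorem append_inj_of_sum : ∀ (l₁ l₁' l₂ l₂' : List ℕ), (∀ x ∈ l₁, 0 < x) → (∀ x ∈ l₁', 0 < x) →
    l₁.sum = l₁'.sum → l₁ ++ l₂ = l₁' ++ l₂' → l₁ = l₁' ∧ l₂ = l₂'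
  | [], [], l₂, l₂', _, _, _, h => ⟨rfl, h⟩
  | [], a :: t, l₂, l₂', _, h', hs, _ => by
      exfalso
      have : 0 < a := h' a (by simp)
      simp [List.sum_cons] at hs; omega
  | a :: t, [], l₂, l₂', h, _, hs, _ => by
      exfalso
      have : 0 < a := h a (by simp)
      simp [List.sum_cons] at hs; omega
  | a :: t, a' :: t', l₂, l₂', h, h', hs, happ => by
      simp only [List.cons_append, List.cons.injEq] at happ
      obtain ⟨rfl, happ⟩ := happ
      simp only [List.sum_cons] at hs
      have hs' : t.sum = t'.sum := by omega
      obtain ⟨h1, h2⟩ := append_inj_of_sum t t' l₂ l₂'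
        (fun x hx => h x (by simp [hx])) (fun x hx => h' x (by simp [hx])) hs' happ
      exact ⟨by rw [h1], h2⟩

noncomputable def Composition.meet {n : ℕ} (α β : Composition n) : Composition n :=
  (compositionEquiv n).symm
    { boundaries := α.toCompositionAsSet.boundaries ∩ β.toCompositionAsSet.boundaries
      zero_mem := Finset.mem_inter.2
        ⟨α.toCompositionAsSet.zero_mem, β.toCompositionAsSet.zero_mem⟩
      getLast_mem := Finset.mem_inter.2
        ⟨α.toCompositionAsSet.getLast_mem, β.toCompositionAsSet.getLast_mem⟩ }

theorem mem_boundaries_iff_lcut {n : ℕ} (c : Composition n) (j : Fin (n + 1)) :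
    j ∈ c.boundaries ↔ LCut c.blocks j.val := by
  constructor
  · intro hj
    rw [Composition.boundaries, Finset.mem_map] at hj
    obtain ⟨i, _, rfl⟩ := hj
    exact ⟨i, rfl⟩
  · rintro ⟨i, hi⟩
    rw [Composition.boundaries, Finset.mem_map]
    rcases le_or_gt i c.length with h | h
    · exact ⟨⟨i, Nat.lt_succ_of_le h⟩, Finset.mem_univ _, Fin.ext hi⟩
    · refine ⟨Fin.last c.length, Finset.mem_univ _, ?_⟩
      have : c.blocks.take i = c.blocks := by
        apply List.take_of_length_le
        rw [c.blocks_length]; omega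
      rw [this, c.blocks_sum] at hi
      show c.boundary _ = j
      rw [c.boundary_last]
      exact Fin.ext hi

theorem meet_eq_single_iff {n : ℕ} (hn : 0 < n) (α β : Composition n) :
    α.meet β = Composition.single n hn ↔
      ∀ j : ℕ, 0 < j → j < n → ¬(LCut α.blocks j ∧ LCut β.blocks j) := by
  rw [Composition.meet, Equiv.symm_apply_eq]
  have : compositionEquiv n (Composition.single n hn)
      = (Composition.single n hn).toCompositionAsSet := rfl
  rw [this, CompositionAsSet.ext_iff]
  show α.toCompositionAsSet.boundaries ∩ β.toCompositionAsSet.boundaries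
      = (Composition.single n hn).boundaries ↔ _
  rw [Composition.toCompositionAsSet_boundaries, Composition.toCompositionAsSet_boundaries]
  have hsingle : ∀ j : Fin (n+1), j ∈ (Composition.single n hn).boundaries ↔
      (j : ℕ) = 0 ∨ (j : ℕ) = n := by
    intro j
    rw [mem_boundaries_iff_lcut]
    constructor
    · rintro ⟨i, hi⟩
      rw [Composition.single_blocks] at hi
      match i with
      | 0 => left; exact hi.symm
      | (i+1) =>
        right
        simp [List.take_succ_cons] at hi
        omega
    · rintro (h | h)
      · exact h ▸ lcut_zero _
      · have := lcut_sum (Composition.single n hn).blocks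
        rw [Composition.blocks_sum] at this
        rw [h]; exact this
  constructor
  · intro h j hj0 hjn ⟨h1, h2⟩
    have hj : (⟨j, by omega⟩ : Fin (n+1)) ∈ α.boundaries ∩ β.boundaries := by
      rw [Finset.mem_inter, mem_boundaries_iff_lcut, mem_boundaries_iff_lcut]
      exact ⟨h1, h2⟩
    rw [h, hsingle] at hj
    simp at hj
    omega
  · intro h
    ext j
    rw [Finset.mem_inter, mem_boundaries_iff_lcut, mem_boundaries_iff_lcut, hsingle]
    constructor
    · rintro ⟨h1, h2⟩
      by_contra hcon
      push_neg at hcon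
      have hjn : (j : ℕ) < n := by
        have := lcut_le h1
        rw [α.blocks_sum] at this
        omega
      exact h j (by omega) hjn ⟨h1, h2⟩
    · rintro (h0 | hlast)
      · have : j = (0 : Fin (n+1)) := Fin.ext h0
        subst this
        exact ⟨lcut_zero _, lcut_zero _⟩
      · have h1 := lcut_sum α.blocks
        have h2 := lcut_sum β.blocks
        rw [α.blocks_sum] at h1
        rw [β.blocks_sum] at h2
        rw [hlast]
        exact ⟨h1, h2⟩


theorem lcut_top {n : ℕ} (c : Composition n) : LCut c.blocks n := by
  have := lcut_sum c.blocks
  rwa [c.blocks_sum] at this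

/-! ### append, fcc -/

def appendC {s t n : ℕ} (h : s + t = n) (c₁ : Composition s) (c₂ : Composition t) :
    Composition n :=
  ⟨c₁.blocks ++ c₂.blocks,
   fun hx => (List.mem_append.1 hx).elim (c₁.blocks_pos) (c₂.blocks_pos),
   by rw [List.sum_append, c₁.blocks_sum, c₂.blocks_sum, h]⟩

@[simp] theorem appendC_blocks {s t n : ℕ} (h : s + t = n) (c₁ : Composition s)
    (c₂ : Composition t) : (appendC h c₁ c₂).blocks = c₁.blocks ++ c₂.blocks := rfl

def CommonCut {n : ℕ} (x : Composition n × Composition n) (j : ℕ) : Prop :=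
  0 < j ∧ LCut x.1.blocks j ∧ LCut x.2.blocks j

theorem commonCut_exists {n : ℕ} (hn : 0 < n) (x : Composition n × Composition n) :
    ∃ j, CommonCut x j :=
  ⟨n, hn, lcut_top x.1, lcut_top x.2⟩

noncomputable def fcc {n : ℕ} (x : Composition n × Composition n) : ℕ :=
  if h : ∃ j, CommonCut x j then Nat.find h else 0

theorem fcc_eq_iff {n : ℕ} (hn : 0 < n) (x : Composition n × Composition n) (m : ℕ) :
    fcc x = m ↔ CommonCut x m ∧ ∀ j < m, ¬ CommonCut x j := by
  rw [fcc, dif_pos (commonCut_exists hn x)]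
  exact Nat.find_eq_iff _

theorem fcc_spec {n : ℕ} (hn : 0 < n) (x : Composition n × Composition n) :
    CommonCut x (fcc x) ∧ ∀ j < fcc x, ¬ CommonCut x j :=
  (fcc_eq_iff hn x _).1 rfl

theorem fcc_mem_Icc {n : ℕ} (hn : 0 < n) (x : Composition n × Composition n) :
    fcc x ∈ Finset.Icc 1 n := by
  obtain ⟨⟨h0, h1, _⟩, _⟩ := fcc_spec hn x
  have := lcut_le h1
  rw [x.1.blocks_sum] at this
  exact Finset.mem_Icc.2 ⟨h0, this⟩

theorem fcc_eq_top_iff {n : ℕ} (hn : 0 < n) (x : Composition n × Composition n) :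
    fcc x = n ↔ x.1.meet x.2 = Composition.single n hn := by
  rw [fcc_eq_iff hn, meet_eq_single_iff hn]
  constructor
  · rintro ⟨_, hmin⟩ j hj0 hjn ⟨h1, h2⟩
    exact hmin j hjn ⟨hj0, h1, h2⟩
  · intro h
    refine ⟨⟨hn, lcut_top x.1, lcut_top x.2⟩, ?_⟩
    rintro j hjn ⟨hj0, h1, h2⟩
    exact h j hj0 hjn ⟨h1, h2⟩

/-! ### sums over compositions -/

theorem blocks_ne_nil {n : ℕ} (hn : 0 < n) (α : Composition n) : α.blocks ≠ [] := by
  intro h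
  have := α.blocks_sum
  rw [h] at this
  simp at this
  omega

noncomputable def AA (p : ℕ → ℝ) (m : ℕ) : ℝ := ∑ α : Composition m, (α.blocks.map p).prod

theorem AA_zero (p : ℕ → ℝ) : AA p 0 = 1 := by
  rw [AA]
  have h1 : ∀ α : Composition 0, ((α.blocks.map p).prod) = 1 := by
    intro α
    have hb : α.blocks = [] := by
      cases hb : α.blocks with
      | nil => rfl
      | cons a t =>
        exfalso
        have h2 := α.blocks_pos (hb ▸ List.mem_cons_self (a := a) (l := t))
        have hs := α.blocks_sum
        rw [hb] at hs
        simp [List.sum_cons] at hs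
        omega
    simp [hb]
  rw [Finset.sum_congr rfl (fun α _ => h1 α), Finset.sum_const, Finset.card_univ,
    composition_card]
  norm_num

theorem AA_rec (p : ℕ → ℝ) {n : ℕ} (hn : 0 < n) :
    AA p n = ∑ k ∈ Finset.Icc 1 n, p k * AA p (n - k) := by
  have hmaps : ∀ α : Composition n, α ∈ Finset.univ → α.blocks.headI ∈ Finset.Icc 1 n := by
    intro α _
    cases hb : α.blocks with
    | nil => exact absurd hb (blocks_ne_nil hn α)
    | cons a t =>
      have hpos := α.blocks_pos (hb ▸ List.mem_cons_self (a := a) (l := t))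
      have hs := α.blocks_sum
      rw [hb, List.sum_cons] at hs
      simp only [List.headI_cons]
      exact Finset.mem_Icc.2 ⟨hpos, by omega⟩
  rw [AA, ← Finset.sum_fiberwise_of_maps_to hmaps]
  refine Finset.sum_congr rfl (fun k hk => ?_)
  obtain ⟨hk1, hkn⟩ := Finset.mem_Icc.1 hk
  rw [AA, Finset.mul_sum]
  symm
  refine Finset.sum_bij
    (i := fun (β : Composition (n - k)) _ => appendC (by omega) (Composition.single k hk1) β)
    ?_ ?_ ?_ ?_
  · intro β _
    simp [Finset.mem_filter, appendC, Composition.single]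
  · intro β₁ _ β₂ _ h
    have := congrArg Composition.blocks h
    simp only [appendC_blocks, Composition.single_blocks, List.singleton_append,
      List.cons.injEq] at this
    exact Composition.ext this.2
  · rintro α hα
    rw [Finset.mem_filter] at hα
    obtain ⟨_, hhead⟩ := hα
    cases hb : α.blocks with
    | nil => exact absurd hb (blocks_ne_nil hn α)
    | cons c t =>
      have hc : c = k := by rw [hb] at hhead; simpa using hhead
      subst hc
      have hpos : ∀ x ∈ t, 0 < x := fun x hx => α.blocks_pos (hb ▸ List.mem_cons_of_mem _ hx)
      have hs : c + t.sum = n := by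
        have := α.blocks_sum; rw [hb, List.sum_cons] at this; exact this
      refine ⟨⟨t, fun {x} hx => hpos x hx, by omega⟩, Finset.mem_univ _, ?_⟩
      apply Composition.ext
      simp [appendC, Composition.single, hb]
  · intro β _
    simp [appendC, Composition.single, List.prod_cons]

theorem a_eq_AA (a p : ℕ → ℝ)
    (hp : ∀ n, 1 ≤ n → p n = a n - ∑ k ∈ Finset.Ico 1 n, a (n - k) * p k) :
    ∀ n, 1 ≤ n → a n = AA p n := by
  intro n
  induction n using Nat.strong_induction_on with
  | _ n IH =>
    intro hn
    have h1 : a n = p n + ∑ k ∈ Finset.Ico 1 n, a (n - k) * p k := by rw [hp n hn]; ring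
    rw [h1, AA_rec p hn]
    have hsplit : Finset.Icc 1 n = Finset.Ico 1 (n + 1) := rfl
    rw [hsplit, Finset.sum_Ico_succ_top (b := n) (by omega)]
    rw [Nat.sub_self, AA_zero, mul_one, add_comm]
    congr 1
    refine Finset.sum_congr rfl (fun k hk => ?_)
    obtain ⟨hk1, hkn⟩ := Finset.mem_Ico.1 hk
    rw [IH (n - k) (by omega) (by omega), mul_comm]

/-! ### stage 4 -/

noncomputable def ABf (p q : ℕ → ℝ) {m : ℕ} (x : Composition m × Composition m) : ℝ :=
  (x.1.blocks.map p).prod * (x.2.blocks.map q).prod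

noncomputable def AB (p q : ℕ → ℝ) (m : ℕ) : ℝ :=
  ∑ x : Composition m × Composition m, ABf p q x

noncomputable def RR (p q : ℕ → ℝ) (m : ℕ) : ℝ :=
  ∑ x : Composition m × Composition m, if fcc x = m then ABf p q x else 0

theorem AB_eq_mul (p q : ℕ → ℝ) (m : ℕ) : AB p q m = AA p m * AA q m := by
  rw [AB, AA, AA, Finset.sum_mul_sum, ← Finset.sum_product']
  rfl

theorem AB_rec (p q : ℕ → ℝ) {n : ℕ} (hn : 0 < n) :
    AB p q n = ∑ s ∈ Finset.Icc 1 n, RR p q s * AB p q (n - s) := by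
  rw [AB, ← Finset.sum_fiberwise_of_maps_to (g := fcc) (fun x _ => fcc_mem_Icc hn x)]
  refine Finset.sum_congr rfl (fun s hs => ?_)
  obtain ⟨hs1, hsn⟩ := Finset.mem_Icc.1 hs
  have hst : s + (n - s) = n := by omega
  rw [RR, AB, ← Finset.sum_filter, Finset.sum_mul_sum, ← Finset.sum_product']
  symm
  refine Finset.sum_bij
    (i := fun (w : (Composition s × Composition s) × (Composition (n-s) × Composition (n-s))) _ =>
      (appendC hst w.1.1 w.2.1, appendC hst w.1.2 w.2.2)) ?_ ?_ ?_ ?_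
  · -- maps to the fiber fcc = s
    rintro w hw
    rw [Finset.mem_product, Finset.mem_filter] at hw
    obtain ⟨⟨-, hw1⟩, -⟩ := hw
    obtain ⟨⟨-, hcut1, hcut2⟩, hmin⟩ := (fcc_eq_iff hs1 w.1 s).1 hw1
    rw [Finset.mem_filter]
    refine ⟨Finset.mem_univ _, (fcc_eq_iff hn _ s).2 ⟨⟨hs1, ?_, ?_⟩, ?_⟩⟩
    · exact lcut_append.2 (Or.inl hcut1)
    · exact lcut_append.2 (Or.inl hcut2)
    · rintro j hj ⟨hj0, hj1, hj2⟩
      have hsum1 : w.1.1.blocks.sum = s := w.1.1.blocks_sum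
      have hsum2 : w.1.2.blocks.sum = s := w.1.2.blocks_sum
      have hj1' : LCut w.1.1.blocks j := by
        rcases lcut_append.1 hj1 with h | ⟨j', _, rfl⟩
        · exact h
        · omega
      have hj2' : LCut w.1.2.blocks j := by
        rcases lcut_append.1 hj2 with h | ⟨j', _, rfl⟩
        · exact h
        · omega
      exact hmin j hj ⟨hj0, hj1', hj2'⟩
  · -- injective
    rintro w₁ hw₁ w₂ hw₂ h
    rw [Prod.ext_iff] at h
    obtain ⟨h1, h2⟩ := h
    have e1 := congrArg Composition.blocks h1
    have e2 := congrArg Composition.blocks h2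
    simp only [appendC_blocks] at e1 e2
    obtain ⟨f1, f2⟩ := append_inj_of_sum _ _ _ _ (fun x hx => w₁.1.1.blocks_pos hx)
      (fun x hx => w₂.1.1.blocks_pos hx)
      (by rw [w₁.1.1.blocks_sum, w₂.1.1.blocks_sum]) e1
    obtain ⟨g1, g2⟩ := append_inj_of_sum _ _ _ _ (fun x hx => w₁.1.2.blocks_pos hx)
      (fun x hx => w₂.1.2.blocks_pos hx)
      (by rw [w₁.1.2.blocks_sum, w₂.1.2.blocks_sum]) e2
    have : w₁.1 = w₂.1 := Prod.ext (Composition.ext f1) (Composition.ext g1)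
    have : w₁.2 = w₂.2 := Prod.ext (Composition.ext f2) (Composition.ext g2)
    exact Prod.ext ‹w₁.1 = w₂.1› ‹w₁.2 = w₂.2›
  · -- surjective
    rintro x hx
    rw [Finset.mem_filter] at hx
    obtain ⟨-, hfcc⟩ := hx
    obtain ⟨⟨-, hcut1, hcut2⟩, hmin⟩ := (fcc_eq_iff hn x s).1 hfcc
    obtain ⟨i₁, hi₁⟩ := hcut1
    obtain ⟨i₂, hi₂⟩ := hcut2
    have hsplit1 := List.take_append_drop i₁ x.1.blocks
    have hsplit2 := List.take_append_drop i₂ x.2.blocks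
    have hdsum1 : (x.1.blocks.drop i₁).sum = n - s := by
      have := congrArg List.sum hsplit1
      rw [List.sum_append, hi₁, x.1.blocks_sum] at this
      omega
    have hdsum2 : (x.2.blocks.drop i₂).sum = n - s := by
      have := congrArg List.sum hsplit2
      rw [List.sum_append, hi₂, x.2.blocks_sum] at this
      omega
    refine ⟨((⟨x.1.blocks.take i₁, fun hx' => x.1.blocks_pos (List.take_subset _ _ hx'), hi₁⟩,
             ⟨x.2.blocks.take i₂, fun hx' => x.2.blocks_pos (List.take_subset _ _ hx'), hi₂⟩),
            (⟨x.1.blocks.drop i₁, fun hx' => x.1.blocks_pos (List.drop_subset _ _ hx'), hdsum1⟩,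
             ⟨x.2.blocks.drop i₂, fun hx' => x.2.blocks_pos (List.drop_subset _ _ hx'), hdsum2⟩)),
           ?_, ?_⟩
    · rw [Finset.mem_product, Finset.mem_filter]
      refine ⟨⟨Finset.mem_univ _, ?_⟩, Finset.mem_univ _⟩
      refine (fcc_eq_iff hs1 _ s).2 ⟨⟨hs1, ?_, ?_⟩, ?_⟩
      · have := lcut_sum (x.1.blocks.take i₁)
        rwa [hi₁] at this
      · have := lcut_sum (x.2.blocks.take i₂)
        rwa [hi₂] at this
      · rintro j hj ⟨hj0, hj1, hj2⟩
        refine hmin j hj ⟨hj0, ?_, ?_⟩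
        · rw [← hsplit1]; exact lcut_append.2 (Or.inl hj1)
        · rw [← hsplit2]; exact lcut_append.2 (Or.inl hj2)
    · apply Prod.ext
      · apply Composition.ext
        simp [appendC]
      · apply Composition.ext
        simp [appendC]
  · -- values
    intro w hw
    simp only [ABf, appendC_blocks, List.map_append, List.prod_append]
    ring

/-- If `(p n)`, `(q n)`, `(r n)` are the Boolean transforms of the
real sequences `(a n)`, `(b n)` and of their Hadamard product `(a n * b n)`
respectively, then for every `n ≥ 1`,
`r n = ∑ p_α q_β`, the sum over all pairs `(α, β)` of compositions of `n` whose
meet is the one-block composition `(n)` (equivalently, `PS(α) ∩ PS(β) = ∅`). -/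
theorem boolean_transform_hadamard (a b p q r : ℕ → ℝ)
    (hp : ∀ n, 1 ≤ n → p n = a n - ∑ k ∈ Finset.Ico 1 n, a (n - k) * p k)
    (hq : ∀ n, 1 ≤ n → q n = b n - ∑ k ∈ Finset.Ico 1 n, b (n - k) * q k)
    (hr : ∀ n, 1 ≤ n → r n = a n * b n - ∑ k ∈ Finset.Ico 1 n, (a (n - k) * b (n - k)) * r k) :
    ∀ n (hn : 1 ≤ n),
      r n = ∑ x : Composition n × Composition n,
        if x.1.meet x.2 = Composition.single n hn then
          (x.1.blocks.map p).prod * (x.2.blocks.map q).prod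
        else 0 := by
  have hab : ∀ m, 1 ≤ m → AB p q m = a m * b m := by
    intro m hm
    rw [AB_eq_mul, ← a_eq_AA a p hp m hm, ← a_eq_AA b q hq m hm]
  have hab0 : AB p q 0 = 1 := by rw [AB_eq_mul, AA_zero, AA_zero, mul_one]
  have main : ∀ n, 1 ≤ n → r n = RR p q n := by
    intro n
    induction n using Nat.strong_induction_on with
    | _ n IH =>
      intro hn
      have h2 := AB_rec p q (hn : 0 < n)
      have hsplit : Finset.Icc 1 n = Finset.Ico 1 (n + 1) := rfl
      rw [hsplit, Finset.sum_Ico_succ_top (b := n) (by omega), Nat.sub_self, hab0,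
        mul_one] at h2
      have h3 : RR p q n = AB p q n - ∑ s ∈ Finset.Ico 1 n, RR p q s * AB p q (n - s) := by
        rw [h2]; ring
      rw [hr n hn, h3, hab n hn]
      congr 1
      refine Finset.sum_congr rfl fun k hk => ?_
      obtain ⟨hk1, hkn⟩ := Finset.mem_Ico.1 hk
      rw [IH k hkn hk1, hab (n - k) (by omega), mul_comm]
  intro n hn
  rw [main n hn, RR]
  refine Finset.sum_congr rfl fun x _ => ?_
  refine if_congr ?_ rfl rfl
  exact fcc_eq_top_iff hn x
end

section
/- If (a_n)_{n≥1} and (b_n)_{n≥1} are real sequences each having nonnegative Boolean transform, then their Hadamard product (a_n b_n)_{n≥1} also has nonnegative Boolean transform. -/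
open Finset

/-- Fuel-based auxiliary for the "no common partial sums" weight. -/
def BTEaux (p q : ℕ → ℝ) : ℕ → ℕ → ℕ → ℝ
  | 0, _, _ => 0
  | (f+1), i, j =>
    if i = 0 ∧ j = 0 then 1
    else if i = j then 0
    else if j < i then ∑ k ∈ Finset.Icc 1 i, p k * BTEaux p q f (i - k) j
    else ∑ k ∈ Finset.Icc 1 j, q k * BTEaux p q f i (j - k)

def BTE (p q : ℕ → ℝ) (i j : ℕ) : ℝ := BTEaux p q (i + j + 1) i j

lemma BTEaux_stable (p q : ℕ → ℝ) : ∀ f i j, i + j < f → BTEaux p q f i j = BTE p q i j := by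
  intro f
  induction f using Nat.strong_induction_on with
  | _ f ih =>
    intro i j hlt
    match f, hlt with
    | f+1, hlt =>
      unfold BTE
      rw [show i + j + 1 = (i+j) + 1 from rfl]
      simp only [BTEaux]
      split_ifs with h1 h2 h3
      · rfl
      · rfl
      · refine Finset.sum_congr rfl fun k hk => ?_
        simp only [mem_Icc] at hk
        rw [ih f (by omega) _ _ (by omega), ih (i+j) (by omega) _ _ (by omega)]
      · refine Finset.sum_congr rfl fun k hk => ?_
        simp only [mem_Icc] at hk
        rw [ih f (by omega) _ _ (by omega), ih (i+j) (by omega) _ _ (by omega)]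

lemma BTE_eq (p q : ℕ → ℝ) (i j : ℕ) :
    BTE p q i j = if i = 0 ∧ j = 0 then 1 else if i = j then 0
      else if j < i then ∑ k ∈ Finset.Icc 1 i, p k * BTE p q (i-k) j
      else ∑ k ∈ Finset.Icc 1 j, q k * BTE p q i (j-k) := by
  conv_lhs => unfold BTE
  rw [show i + j + 1 = (i+j) + 1 from rfl]
  simp only [BTEaux]
  split_ifs with h1 h2 h3
  · rfl
  · rfl
  · refine Finset.sum_congr rfl fun k hk => ?_
    simp only [mem_Icc] at hk
    rw [BTEaux_stable p q (i+j) _ _ (by omega)]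
  · refine Finset.sum_congr rfl fun k hk => ?_
    simp only [mem_Icc] at hk
    rw [BTEaux_stable p q (i+j) _ _ (by omega)]

lemma BTE_zero (p q : ℕ → ℝ) : BTE p q 0 0 = 1 := by rw [BTE_eq]; simp

lemma BTE_diag (p q : ℕ → ℝ) (n : ℕ) (hn : 1 ≤ n) : BTE p q n n = 0 := by
  rw [BTE_eq]; simp; omega

lemma BTE_gt (p q : ℕ → ℝ) {i j : ℕ} (h : j < i) :
    BTE p q i j = ∑ k ∈ Finset.Icc 1 i, p k * BTE p q (i-k) j := by
  rw [BTE_eq]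
  have h1 : ¬(i = 0 ∧ j = 0) := by omega
  have h2 : ¬(i = j) := by omega
  simp [h1, h2, h]

lemma BTE_lt (p q : ℕ → ℝ) {i j : ℕ} (h : i < j) :
    BTE p q i j = ∑ k ∈ Finset.Icc 1 j, q k * BTE p q i (j-k) := by
  rw [BTE_eq]
  have h1 : ¬(i = 0 ∧ j = 0) := by omega
  have h2 : ¬(i = j) := by omega
  have h3 : ¬(j < i) := by omega
  simp [h1, h2, h3]

lemma BTE_nonneg (p q : ℕ → ℝ) (hp0 : ∀ n, 1 ≤ n → 0 ≤ p n) (hq0 : ∀ n, 1 ≤ n → 0 ≤ q n) :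
    ∀ i j, 0 ≤ BTE p q i j := by
  have H : ∀ N i j, i + j ≤ N → 0 ≤ BTE p q i j := by
    intro N
    induction N using Nat.strong_induction_on with
    | _ N ih =>
      intro i j hij
      rw [BTE_eq]
      split_ifs with h1 h2 h3
      · norm_num
      · exact le_rfl
      · exact Finset.sum_nonneg fun k hk => by
          simp only [mem_Icc] at hk
          exact mul_nonneg (hp0 k hk.1) (by
            rcases Nat.eq_zero_or_pos N with h | h
            · omega
            · exact ih (N-1) (by omega) _ _ (by omega))
      · exact Finset.sum_nonneg fun k hk => by
          simp only [mem_Icc] at hk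
          exact mul_nonneg (hq0 k hk.1) (by
            rcases Nat.eq_zero_or_pos N with h | h
            · omega
            · exact ih (N-1) (by omega) _ _ (by omega))
  exact fun i j => H (i+j) i j le_rfl
def BText (a : ℕ → ℝ) (i : ℕ) : ℝ := if i = 0 then 1 else a i

def BTrho (p q : ℕ → ℝ) (n : ℕ) : ℝ :=
  ∑ j ∈ Finset.Icc 1 n, ∑ k ∈ Finset.Icc 1 n, p j * (q k * BTE p q (n-j) (n-k))

lemma BTrho_nonneg (p q : ℕ → ℝ) (hp0 : ∀ n, 1 ≤ n → 0 ≤ p n)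
    (hq0 : ∀ n, 1 ≤ n → 0 ≤ q n) (n : ℕ) : 0 ≤ BTrho p q n := by
  refine Finset.sum_nonneg fun j hj => Finset.sum_nonneg fun k hk => ?_
  simp only [Finset.mem_Icc] at hj hk
  exact mul_nonneg (hp0 j hj.1) (mul_nonneg (hq0 k hk.1) (BTE_nonneg p q hp0 hq0 _ _))

lemma BText_rec (a p : ℕ → ℝ)
    (hp : ∀ n, 1 ≤ n → p n = a n - ∑ k ∈ Finset.Ico 1 n, a (n - k) * p k) :
    ∀ i, 1 ≤ i → BText a i = ∑ k ∈ Finset.Icc 1 i, p k * BText a (i-k) := by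
  intro i hi
  have h0 : BText a i = a i := by simp only [BText, if_neg (by omega : ¬ i = 0)]
  have hai : a i = p i + ∑ k ∈ Finset.Ico 1 i, a (i-k) * p k := by
    have := hp i hi; linarith
  rw [h0, hai, ← Finset.Ico_insert_right hi, Finset.sum_insert (by simp)]
  have : BText a (i - i) = 1 := by simp [BText]
  rw [this, mul_one]
  congr 1
  refine Finset.sum_congr rfl fun k hk => ?_
  simp only [Finset.mem_Ico] at hk
  have : BText a (i - k) = a (i - k) := by
    simp only [BText, if_neg (by omega : ¬ i - k = 0)]
  rw [this, mul_comm]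
lemma BTkey (a b p q : ℕ → ℝ)
    (hp : ∀ n, 1 ≤ n → p n = a n - ∑ k ∈ Finset.Ico 1 n, a (n - k) * p k)
    (hq : ∀ n, 1 ≤ n → q n = b n - ∑ k ∈ Finset.Ico 1 n, b (n - k) * q k) :
    ∀ N i j, i + j ≤ N →
    BText a i * BText b j =
      BTE p q i j + ∑ m ∈ Finset.Icc 1 (min i j),
        BTrho p q m * (BText a (i-m) * BText b (j-m)) := by
  intro N
  induction N using Nat.strong_induction_on with
  | _ N ih =>
  intro i j hN
  rcases lt_trichotomy j i with hij | hij | hij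
  · -- j < i
    have hi1 : 1 ≤ i := by omega
    have hmin : min i j = j := by omega
    rw [hmin, BText_rec a p hp i hi1, Finset.sum_mul]
    have hterm : ∀ k ∈ Finset.Icc 1 i,
        p k * BText a (i-k) * BText b j
          = p k * BTE p q (i-k) j
            + ∑ m ∈ Finset.Icc 1 j, (if k + m ≤ i then
                p k * (BTrho p q m * (BText a (i-k-m) * BText b (j-m))) else 0) := by
      intro k hk
      simp only [Finset.mem_Icc] at hk
      rw [mul_assoc, ih (N-1) (by omega) (i-k) j (by omega), mul_add, Finset.mul_sum]
      congr 1
      rw [show Finset.Icc 1 (min (i-k) j) = (Finset.Icc 1 j).filter (fun m => k + m ≤ i) from by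
        ext m; simp only [Finset.mem_Icc, Finset.mem_filter]; omega]
      rw [Finset.sum_filter]
    rw [Finset.sum_congr rfl hterm, Finset.sum_add_distrib]
    congr 1
    · exact (BTE_gt p q hij).symm
    · rw [Finset.sum_comm]
      refine Finset.sum_congr rfl fun m hm => ?_
      simp only [Finset.mem_Icc] at hm
      have him : 1 ≤ i - m := by omega
      rw [BText_rec a p hp (i-m) him, Finset.sum_mul, Finset.mul_sum]
      rw [show Finset.Icc 1 (i-m) = (Finset.Icc 1 i).filter (fun k => k + m ≤ i) from by
        ext k; simp only [Finset.mem_Icc, Finset.mem_filter]; omega]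
      rw [Finset.sum_filter]
      refine Finset.sum_congr rfl fun k hk => ?_
      split_ifs with h
      · rw [show i - k - m = i - m - k from by omega]; ring
      · rfl
  · -- i = j
    subst hij
    rcases Nat.eq_zero_or_pos j with hj0 | hj1
    · subst hj0; simp [BText, BTE_zero]
    · have hmin : min j j = j := by omega
      rw [hmin, BText_rec a p hp j hj1, Finset.sum_mul]
      have hterm : ∀ k ∈ Finset.Icc 1 j,
          p k * BText a (j-k) * BText b j
            = (∑ l ∈ Finset.Icc 1 j, p k * (q l * BTE p q (j-k) (j-l)))
              + ∑ m ∈ Finset.Icc 1 j, (if k + m ≤ j then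
                  p k * (BTrho p q m * (BText a (j-k-m) * BText b (j-m))) else 0) := by
        intro k hk
        simp only [Finset.mem_Icc] at hk
        rw [mul_assoc, ih (N-1) (by omega) (j-k) j (by omega), mul_add, Finset.mul_sum,
          BTE_lt p q (show j - k < j by omega), Finset.mul_sum]
        congr 1
        rw [show Finset.Icc 1 (min (j-k) j) = (Finset.Icc 1 j).filter (fun m => k + m ≤ j) from by
          ext m; simp only [Finset.mem_Icc, Finset.mem_filter]; omega]
        rw [Finset.sum_filter]
      rw [Finset.sum_congr rfl hterm, Finset.sum_add_distrib, BTE_diag p q j hj1]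
      have h1 : (∑ k ∈ Finset.Icc 1 j, ∑ l ∈ Finset.Icc 1 j, p k * (q l * BTE p q (j-k) (j-l)))
          = BTrho p q j := rfl
      rw [h1, Finset.sum_comm, zero_add]
      have hmem : j ∈ Finset.Icc 1 j := by simp only [Finset.mem_Icc]; omega
      have hF := Finset.add_sum_erase (Finset.Icc 1 j)
        (fun m => ∑ k ∈ Finset.Icc 1 j, if k + m ≤ j then
          p k * (BTrho p q m * (BText a (j-k-m) * BText b (j-m))) else 0) hmem
      have hG := Finset.add_sum_erase (Finset.Icc 1 j)
        (fun m => BTrho p q m * (BText a (j-m) * BText b (j-m))) hmem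
      rw [Finset.Icc_erase_right] at hF hG
      rw [← hF, ← hG]
      beta_reduce
      have h2 : (∑ k ∈ Finset.Icc 1 j, if k + j ≤ j then
          p k * (BTrho p q j * (BText a (j-k-j) * BText b (j-j))) else 0) = 0 := by
        refine Finset.sum_eq_zero fun k hk => ?_
        simp only [Finset.mem_Icc] at hk
        rw [if_neg (by omega)]
      rw [h2]
      have h3 : BTrho p q j * (BText a (j-j) * BText b (j-j)) = BTrho p q j := by
        simp [BText]
      rw [h3, zero_add]
      congr 1
      refine Finset.sum_congr rfl fun m hm => ?_
      simp only [Finset.mem_Ico] at hm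
      have hjm : 1 ≤ j - m := by omega
      rw [BText_rec a p hp (j-m) hjm, Finset.sum_mul, Finset.mul_sum]
      rw [show Finset.Icc 1 (j-m) = (Finset.Icc 1 j).filter (fun k => k + m ≤ j) from by
        ext k; simp only [Finset.mem_Icc, Finset.mem_filter]; omega]
      rw [Finset.sum_filter]
      refine Finset.sum_congr rfl fun k hk => ?_
      split_ifs with h
      · rw [show j - k - m = j - m - k from by omega]; ring
      · rfl
  · -- i < j
    have hj1 : 1 ≤ j := by omega
    have hmin : min i j = i := by omega
    rw [hmin, BText_rec b q hq j hj1, Finset.mul_sum]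
    have hterm : ∀ k ∈ Finset.Icc 1 j,
        BText a i * (q k * BText b (j-k))
          = q k * BTE p q i (j-k)
            + ∑ m ∈ Finset.Icc 1 i, (if k + m ≤ j then
                q k * (BTrho p q m * (BText a (i-m) * BText b (j-k-m))) else 0) := by
      intro k hk
      simp only [Finset.mem_Icc] at hk
      rw [show BText a i * (q k * BText b (j-k)) = q k * (BText a i * BText b (j-k)) from by ring,
        ih (N-1) (by omega) i (j-k) (by omega), mul_add, Finset.mul_sum]
      congr 1
      rw [show Finset.Icc 1 (min i (j-k)) = (Finset.Icc 1 i).filter (fun m => k + m ≤ j) from by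
        ext m; simp only [Finset.mem_Icc, Finset.mem_filter]; omega]
      rw [Finset.sum_filter]
    rw [Finset.sum_congr rfl hterm, Finset.sum_add_distrib]
    congr 1
    · exact (BTE_lt p q hij).symm
    · rw [Finset.sum_comm]
      refine Finset.sum_congr rfl fun m hm => ?_
      simp only [Finset.mem_Icc] at hm
      have hjm : 1 ≤ j - m := by omega
      rw [BText_rec b q hq (j-m) hjm, Finset.mul_sum, Finset.mul_sum]
      rw [show Finset.Icc 1 (j-m) = (Finset.Icc 1 j).filter (fun k => k + m ≤ j) from by
        ext k; simp only [Finset.mem_Icc, Finset.mem_filter]; omega]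
      rw [Finset.sum_filter]
      refine Finset.sum_congr rfl fun k hk => ?_
      split_ifs with h
      · rw [show j - k - m = j - m - k from by omega]; ring
      · rfl
/-- If the real sequences `(a n)` and `(b n)` both have nonnegative
Boolean transform, then so does their Hadamard product `(a n * b n)`. -/
theorem hadamard_nonneg_boolean_transform (a b p q r : ℕ → ℝ)
    (hp : ∀ n, 1 ≤ n → p n = a n - ∑ k ∈ Finset.Ico 1 n, a (n - k) * p k)
    (hq : ∀ n, 1 ≤ n → q n = b n - ∑ k ∈ Finset.Ico 1 n, b (n - k) * q k)
    (hr : ∀ n, 1 ≤ n → r n = a n * b n - ∑ k ∈ Finset.Ico 1 n, (a (n - k) * b (n - k)) * r k)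
    (hp0 : ∀ n, 1 ≤ n → 0 ≤ p n) (hq0 : ∀ n, 1 ≤ n → 0 ≤ q n) :
    ∀ n, 1 ≤ n → 0 ≤ r n := by
  have hreq : ∀ n, 1 ≤ n → r n = BTrho p q n := by
    intro n
    induction n using Nat.strong_induction_on with
    | _ n ih =>
    intro hn
    have hkey := BTkey a b p q hp hq (n + n) n n le_rfl
    rw [min_self, BTE_diag p q n hn, zero_add] at hkey
    have hmem : n ∈ Finset.Icc 1 n := by simp only [Finset.mem_Icc]; omega
    have hG := Finset.add_sum_erase (Finset.Icc 1 n)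
      (fun m => BTrho p q m * (BText a (n-m) * BText b (n-m))) hmem
    rw [Finset.Icc_erase_right] at hG
    rw [← hG] at hkey
    beta_reduce at hkey
    have hA : BText a n * BText b n = a n * b n := by
      simp only [BText, if_neg (by omega : ¬ n = 0)]
    have h0 : BTrho p q n * (BText a (n-n) * BText b (n-n)) = BTrho p q n := by
      simp [BText]
    rw [hA, h0] at hkey
    rw [hr n hn, hkey]
    have hS : ∑ k ∈ Finset.Ico 1 n, (a (n-k) * b (n-k)) * r k
        = ∑ m ∈ Finset.Ico 1 n, BTrho p q m * (BText a (n-m) * BText b (n-m)) := by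
      refine Finset.sum_congr rfl fun k hk => ?_
      simp only [Finset.mem_Ico] at hk
      rw [ih k hk.2 hk.1]
      simp only [BText, if_neg (by omega : ¬ n - k = 0)]
      ring
    rw [hS]; ring
  intro n hn
  rw [hreq n hn]
  exact BTrho_nonneg p q hp0 hq0 n
end

section
/- Let k be a field, G a group, and let V and W be finite-dimensional k-vector spaces equipped with representations of G, with W free as a module over the group algebra k[G]. Let U denote V ⊗_k W with the diagonal G-action. Then dim_k (U_G) = (dim_k V) · (dim_k (W_G)), where (−)_G denotes the space of coinvariants, i.e., the quotient of the module by the k-subspace spanned by all elements v − g·v. -/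
open TensorProduct

namespace Representation

variable {k G V : Type*} [CommSemiring k] [Monoid G] [AddCommMonoid V] [Module k V]
variable (ρ : Representation k G V)

instance instIsScalarTowerAsModule : IsScalarTower k (MonoidAlgebra k G) ρ.asModule :=
  ⟨fun c a m => by
    apply ρ.asModuleEquiv.injective
    show ρ.asModuleEquiv ((c • a) • m) = ρ.asModuleEquiv (c • (a • m))
    rw [ρ.asModuleEquiv_map_smul, map_smul]
    show (c • ρ.asAlgebraHom a) (ρ.asModuleEquiv m) = ρ.asModuleEquiv (c • (a • m))
    rw [LinearMap.smul_apply]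
    show c • ρ.asAlgebraHom a (ρ.asModuleEquiv m) = c • ρ.asModuleEquiv (a • m)
    rw [ρ.asModuleEquiv_map_smul]⟩

/-- `asModuleEquiv` as a `k`-linear equivalence. -/
def asModuleLEquiv : ρ.asModule ≃ₗ[k] V :=
  ρ.asModuleEquiv.toLinearEquiv (fun _ _ => rfl)

@[simp] lemma asModuleLEquiv_apply (x : ρ.asModule) :
    ρ.asModuleLEquiv x = ρ.asModuleEquiv x := rfl

/-- From a `MonoidAlgebra k G`-basis of `ρ.asModule`, a `k`-basis of `V` indexed by
pairs, on which `G` acts by translation on the second coordinate. -/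
noncomputable def freeBasis {ι : Type*} (b : Module.Basis ι (MonoidAlgebra k G) ρ.asModule) :
    Module.Basis ((_ : ι) × G) k V :=
  (Finsupp.basis (fun _ : ι => (MonoidAlgebra.basis G k : Module.Basis G k (MonoidAlgebra k G)))).map
    ((b.repr.restrictScalars k).symm ≪≫ₗ ρ.asModuleLEquiv)

lemma freeBasis_apply {ι : Type*} (b : Module.Basis ι (MonoidAlgebra k G) ρ.asModule) (i : ι) (h : G) :
    ρ.freeBasis b ⟨i, h⟩ = ρ h (ρ.asModuleEquiv (b i)) := by
  simp only [freeBasis, Module.Basis.map_apply, Finsupp.coe_basis, LinearEquiv.trans_apply,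
    LinearEquiv.restrictScalars_symm_apply, asModuleLEquiv_apply, MonoidAlgebra.basis_apply]
  erw [Module.Basis.repr_symm_single]
  show ρ.asAlgebraHom (MonoidAlgebra.single h 1) (ρ.asModuleEquiv (b i)) = _
  rw [asAlgebraHom_single, one_smul]

lemma freeBasis_rho {ι : Type*} (b : Module.Basis ι (MonoidAlgebra k G) ρ.asModule) (g : G) (i : ι)
    (h : G) : ρ g (ρ.freeBasis b ⟨i, h⟩) = ρ.freeBasis b ⟨i, g * h⟩ := by
  rw [freeBasis_apply, freeBasis_apply, ← Module.End.mul_apply, ← map_mul]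

end Representation

/-- The subspace of `V` spanned by the elements `v - g · v`, whose quotient is the
space of coinvariants of the representation. -/
def Representation.coinvariantsKer {k G V : Type*} [CommSemiring k] [Monoid G]
    [AddCommGroup V] [Module k V] (ρ : Representation k G V) : Submodule k V :=
  Submodule.span k {x : V | ∃ (g : G) (v : V), x = v - ρ g v}

/-- Let `V`, `W` be finite-dimensional `k`-vector spaces with
representations of a group `G`, with `W` free over the group algebra `k[G]`.
Let `U = V ⊗ W` with the diagonal action. Then
`dim (U_G) = (dim V) * (dim (W_G))`, where `(−)_G` is the space of coinvariants. -/
theorem finrank_coinvariants_tensor (k G V W : Type*) [Field k] [Group G]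
    [AddCommGroup V] [Module k V] [AddCommGroup W] [Module k W]
    [FiniteDimensional k V] [FiniteDimensional k W]
    (ρV : Representation k G V) (ρW : Representation k G W)
    (hW : Module.Free (MonoidAlgebra k G) ρW.asModule) :
    Module.finrank k ((V ⊗[k] W) ⧸ (ρV.tprod ρW).coinvariantsKer)
      = Module.finrank k V * Module.finrank k (W ⧸ ρW.coinvariantsKer) := by
  classical
  letI := hW
  let b := Module.Free.chooseBasis (MonoidAlgebra k G) ρW.asModule
  set ι := Module.Free.ChooseBasisIndex (MonoidAlgebra k G) ρW.asModule with hι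
  let bK : Module.Basis ((_ : ι) × G) k W := ρW.freeBasis b
  have hbK : ∀ (g : G) (i : ι) (h : G), ρW g (bK ⟨i, h⟩) = bK ⟨i, g * h⟩ :=
    fun g i h => ρW.freeBasis_rho b g i h
  let c := Module.Basis.ofVectorSpace k V
  let B := c.tensorProduct bK
  set F : V ⊗[k] W →ₗ[k] V ⊗[k] W :=
    B.constr k (fun p => ρV p.2.2⁻¹ (c p.1) ⊗ₜ[k] bK p.2) with hF
  set Finv : V ⊗[k] W →ₗ[k] V ⊗[k] W :=
    B.constr k (fun p => ρV p.2.2 (c p.1) ⊗ₜ[k] bK p.2) with hFinv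
  have Fkey : ∀ (p : (_ : ι) × G) (v : V), F (v ⊗ₜ[k] bK p) = ρV p.2⁻¹ v ⊗ₜ[k] bK p := by
    intro p
    have hc : F ∘ₗ (TensorProduct.mk k V W).flip (bK p)
        = ((TensorProduct.mk k V W).flip (bK p)) ∘ₗ (ρV p.2⁻¹) := by
      apply Module.Basis.ext c
      intro j
      simp only [LinearMap.comp_apply, LinearMap.flip_apply, TensorProduct.mk_apply]
      rw [← Module.Basis.tensorProduct_apply c bK j p, hF]
      exact Module.Basis.constr_basis B k _ (j, p)
    intro v
    exact DFunLike.congr_fun hc v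
  have Finvkey : ∀ (p : (_ : ι) × G) (v : V), Finv (v ⊗ₜ[k] bK p) = ρV p.2 v ⊗ₜ[k] bK p := by
    intro p
    have hc : Finv ∘ₗ (TensorProduct.mk k V W).flip (bK p)
        = ((TensorProduct.mk k V W).flip (bK p)) ∘ₗ (ρV p.2) := by
      apply Module.Basis.ext c
      intro j
      simp only [LinearMap.comp_apply, LinearMap.flip_apply, TensorProduct.mk_apply]
      rw [← Module.Basis.tensorProduct_apply c bK j p, hFinv]
      exact Module.Basis.constr_basis B k _ (j, p)
    intro v
    exact DFunLike.congr_fun hc v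
  have hFG : F ∘ₗ Finv = LinearMap.id := by
    apply Module.Basis.ext B
    rintro ⟨j, p⟩
    rw [Module.Basis.tensorProduct_apply']
    simp only [LinearMap.comp_apply, LinearMap.id_apply]
    rw [Finvkey, Fkey, ← Module.End.mul_apply, ← map_mul, inv_mul_cancel, map_one,
      Module.End.one_apply]
  have hGF : Finv ∘ₗ F = LinearMap.id := by
    apply Module.Basis.ext B
    rintro ⟨j, p⟩
    rw [Module.Basis.tensorProduct_apply']
    simp only [LinearMap.comp_apply, LinearMap.id_apply]
    rw [Fkey, Finvkey, ← Module.End.mul_apply, ← map_mul, mul_inv_cancel, map_one,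
      Module.End.one_apply]
  set T : V ⊗[k] W ≃ₗ[k] V ⊗[k] W := LinearEquiv.ofLinear F Finv hFG hGF with hT0
  have Tapply : ∀ (p : (_ : ι) × G) (v : V), T (v ⊗ₜ[k] bK p) = ρV p.2⁻¹ v ⊗ₜ[k] bK p :=
    fun p v => Fkey p v
  have hT : ∀ (g : G) (x : V ⊗[k] W),
      T ((ρV.tprod ρW) g x) = ((1 : Representation k G V).tprod ρW) g (T x) := by
    intro g
    have hc : (T : V ⊗[k] W →ₗ[k] V ⊗[k] W) ∘ₗ ((ρV.tprod ρW) g)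
        = (((1 : Representation k G V).tprod ρW) g) ∘ₗ (T : V ⊗[k] W →ₗ[k] V ⊗[k] W) := by
      apply Module.Basis.ext B
      rintro ⟨j, i, h⟩
      simp only [LinearMap.comp_apply, LinearEquiv.coe_coe]
      rw [Module.Basis.tensorProduct_apply, Representation.tprod_apply, TensorProduct.map_tmul,
        hbK g i h, Tapply, Tapply, Representation.tprod_apply, TensorProduct.map_tmul, hbK g i h]
      have h1 : (g * h)⁻¹ * g = h⁻¹ := by group
      have h2 : ((1 : Representation k G V) g) (ρV h⁻¹ (c j)) = ρV h⁻¹ (c j) := rfl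
      rw [h2, ← Module.End.mul_apply, ← map_mul, h1]
    intro x
    exact DFunLike.congr_fun hc x
  set C1 := (ρV.tprod ρW).coinvariantsKer with hC1
  set C2 := ((1 : Representation k G V).tprod ρW).coinvariantsKer with hC2def
  have hmap : C1.map (T : V ⊗[k] W →ₗ[k] V ⊗[k] W) = C2 := by
    rw [hC1, hC2def, Representation.coinvariantsKer, Representation.coinvariantsKer,
      Submodule.map_span]
    congr 1
    ext y
    constructor
    · rintro ⟨x, ⟨g, v, rfl⟩, rfl⟩
      exact ⟨g, T v, by rw [LinearEquiv.coe_coe, map_sub, hT]⟩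
    · rintro ⟨g, v, rfl⟩
      refine ⟨T.symm v - (ρV.tprod ρW) g (T.symm v), ⟨g, T.symm v, rfl⟩, ?_⟩
      rw [LinearEquiv.coe_coe, map_sub, hT, T.apply_symm_apply]
  have e1 : ((V ⊗[k] W) ⧸ C1) ≃ₗ[k] ((V ⊗[k] W) ⧸ C2) :=
    Submodule.Quotient.equiv _ _ T hmap
  set CW := ρW.coinvariantsKer with hCW
  have hC2 : C2 = LinearMap.range (TensorProduct.map (LinearMap.id : V →ₗ[k] V) CW.subtype) := by
    apply le_antisymm
    · rw [hC2def, Representation.coinvariantsKer, Submodule.span_le]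
      rintro x ⟨g, u, rfl⟩
      induction u using TensorProduct.induction_on with
      | zero => simp
      | tmul v w =>
        have h2 : ((1 : Representation k G V).tprod ρW) g (v ⊗ₜ[k] w) = v ⊗ₜ[k] ρW g w := by
          rw [Representation.tprod_apply, TensorProduct.map_tmul]; rfl
        rw [h2, ← TensorProduct.tmul_sub]
        exact ⟨v ⊗ₜ[k] (⟨w - ρW g w, Submodule.subset_span ⟨g, w, rfl⟩⟩ : CW), rfl⟩
      | add x y hx hy =>
        have h3 : (x + y) - ((1 : Representation k G V).tprod ρW) g (x + y)
            = (x - ((1 : Representation k G V).tprod ρW) g x)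
              + (y - ((1 : Representation k G V).tprod ρW) g y) := by
          rw [map_add]; abel
        rw [h3]
        exact add_mem hx hy
    · rintro x ⟨u, rfl⟩
      induction u using TensorProduct.induction_on with
      | zero => simp
      | tmul v cw =>
        obtain ⟨w0, hw0⟩ := cw
        rw [TensorProduct.map_tmul]
        simp only [LinearMap.id_coe, id_eq, Submodule.coe_subtype]
        rw [hCW, Representation.coinvariantsKer] at hw0
        induction hw0 using Submodule.span_induction with
        | mem x hx =>
          obtain ⟨g, w, rfl⟩ := hx
          refine Submodule.subset_span ⟨g, v ⊗ₜ[k] w, ?_⟩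
          rw [TensorProduct.tmul_sub, Representation.tprod_apply, TensorProduct.map_tmul]
          rfl
        | zero => simp only [TensorProduct.tmul_zero]; exact Submodule.zero_mem _
        | add x y _ _ hx hy =>
          rw [TensorProduct.tmul_add]; exact add_mem hx hy
        | smul a x _ hx =>
          rw [TensorProduct.tmul_smul]; exact Submodule.smul_mem _ a hx
      | add x y hx hy =>
        rw [map_add]; exact add_mem hx hy
  rw [e1.finrank_eq, hC2, ← (TensorProduct.tensorQuotientEquiv V CW).finrank_eq,
    Module.finrank_tensorProduct]
end

section
/- Call a partition X of the set {1, …, n} atomic if there is no i with 1 ≤ i < n such that {1, …, i} is a union of blocks of X. For each k ≥ 1 let d_k denote the number of atomic partitions of {1, …, k}, and let B_n denote the Bell number, the total number of partitions of {1, …, n}. Then for every n ≥ 1, B_n = ∑_{α ⊨ n} d_α, where the sum is over all compositions α = (n_1, …, n_k) of n and d_α := d_{n_1} ⋯ d_{n_k}. -/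
/-- A partition `P` of the `n`-element set `Fin n` is atomic if there is no `i` with
`1 ≤ i < n` such that the initial segment of size `i` is a union of blocks of `P`,
i.e. such that every block lies entirely inside or entirely outside that segment. -/
def Finpartition.Atomic {n : ℕ} (P : Finpartition (Finset.univ : Finset (Fin n))) : Prop :=
  ¬ ∃ i, 1 ≤ i ∧ i < n ∧
    ∀ b ∈ P.parts, (∀ x ∈ b, (x : ℕ) < i) ∨ (∀ x ∈ b, ¬ (x : ℕ) < i)

/-- The number of atomic partitions of a `k`-element set. -/
noncomputable def numAtomicPartitions (k : ℕ) : ℕ :=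
  Nat.card {P : Finpartition (Finset.univ : Finset (Fin k)) // P.Atomic}

/-- The Bell number: the total number of partitions of an `n`-element set. -/
noncomputable def bellNumber (n : ℕ) : ℕ :=
  Nat.card (Finpartition (Finset.univ : Finset (Fin n)))

namespace AtomicBell

open Finset

variable {n : ℕ}

/-- `i` is a break point of `P`. -/
def IsBreak {n : ℕ} (P : Finpartition (Finset.univ : Finset (Fin n))) (i : ℕ) : Prop :=
  ∀ b ∈ P.parts, (∀ x ∈ b, (x : ℕ) < i) ∨ (∀ x ∈ b, ¬ (x : ℕ) < i)

lemma atomic_iff {P : Finpartition (Finset.univ : Finset (Fin n))} :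
    P.Atomic ↔ ∀ i, 1 ≤ i → i < n → ¬ IsBreak P i := by
  unfold Finpartition.Atomic IsBreak
  push_neg
  tauto

lemma isBreak_top (P : Finpartition (Finset.univ : Finset (Fin n))) : IsBreak P n :=
  fun b _ => Or.inl fun x _ => x.isLt

/-- second embedding -/
def emb2 (i n : ℕ) (h : i ≤ n) : Fin (n - i) ↪ Fin n :=
  ⟨fun x => ⟨i + x, by have := x.isLt; omega⟩, fun x y hxy => by
    simpa [Fin.ext_iff] using hxy⟩

@[simp] lemma emb2_val {i : ℕ} (h : i ≤ n) (x : Fin (n - i)) :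
    ((emb2 i n h x : Fin n) : ℕ) = i + x := rfl

def glue {i : ℕ} (h : i ≤ n) (P : Finpartition (Finset.univ : Finset (Fin i)))
    (Q : Finpartition (Finset.univ : Finset (Fin (n - i)))) :
    Finpartition (Finset.univ : Finset (Fin n)) where
  parts := P.parts.image (Finset.map (Fin.castLEEmb h)) ∪ Q.parts.image (Finset.map (emb2 i n h))
  supIndep := by
    rw [Finset.supIndep_iff_pairwiseDisjoint]
    intro c₁ h₁ c₂ h₂ hne
    simp only [coe_union, coe_image, Set.mem_union, Set.mem_image, mem_coe] at h₁ h₂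
    rw [Function.onFun, Finset.disjoint_left]
    simp only [id_eq]
    rcases h₁ with ⟨b₁, hb₁, rfl⟩ | ⟨b₁, hb₁, rfl⟩ <;>
      rcases h₂ with ⟨b₂, hb₂, rfl⟩ | ⟨b₂, hb₂, rfl⟩
    · have hbne : b₁ ≠ b₂ := fun e => hne (by rw [e])
      have hd := P.disjoint hb₁ hb₂ hbne
      intro a ha ha'
      simp only [id_eq, Finset.mem_map] at ha ha'
      obtain ⟨x, hx, rfl⟩ := ha
      obtain ⟨y, hy, hxy⟩ := ha'
      have : y = x := (Fin.castLEEmb h).injective hxy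
      subst this
      exact (Finset.disjoint_left.1 hd) hx hy
    · intro a ha ha'
      simp only [id_eq, Finset.mem_map] at ha ha'
      obtain ⟨x, hx, rfl⟩ := ha
      obtain ⟨y, hy, hxy⟩ := ha'
      have h1 : ((Fin.castLEEmb h x : Fin n) : ℕ) < i := by simp [x.isLt]
      rw [← hxy] at h1
      simp only [emb2_val] at h1
      omega
    · intro a ha ha'
      simp only [id_eq, Finset.mem_map] at ha ha'
      obtain ⟨x, hx, rfl⟩ := ha
      obtain ⟨y, hy, hxy⟩ := ha'
      have h1 : ((emb2 i n h x : Fin n) : ℕ) ≥ i := by simp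
      rw [← hxy] at h1
      simp only [Fin.coe_castLEEmb, Fin.coe_castLE] at h1
      have := y.isLt
      omega
    · have hbne : b₁ ≠ b₂ := fun e => hne (by rw [e])
      have hd := Q.disjoint hb₁ hb₂ hbne
      intro a ha ha'
      simp only [id_eq, Finset.mem_map] at ha ha'
      obtain ⟨x, hx, rfl⟩ := ha
      obtain ⟨y, hy, hxy⟩ := ha'
      have : y = x := (emb2 i n h).injective hxy
      subst this
      exact (Finset.disjoint_left.1 hd) hx hy
  sup_parts := by
    apply Finset.Subset.antisymm (fun x _ => mem_univ x)
    intro x _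
    rw [Finset.mem_sup]
    by_cases hx : (x : ℕ) < i
    · have hx' : (⟨x, hx⟩ : Fin i) ∈ (Finset.univ : Finset (Fin i)) := mem_univ _
      rw [← P.sup_parts, Finset.mem_sup] at hx'
      obtain ⟨b, hb, hxb⟩ := hx'
      refine ⟨b.map (Fin.castLEEmb h), ?_, ?_⟩
      · exact mem_union_left _ (mem_image_of_mem _ hb)
      · simp only [id_eq, Finset.mem_map]
        exact ⟨⟨x, hx⟩, by simpa using hxb, by ext; simp⟩
    · have hxi : (x : ℕ) - i < n - i := by have := x.isLt; omega
      have hx' : (⟨(x : ℕ) - i, hxi⟩ : Fin (n - i)) ∈ (Finset.univ : Finset (Fin (n - i))) :=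
        mem_univ _
      rw [← Q.sup_parts, Finset.mem_sup] at hx'
      obtain ⟨b, hb, hxb⟩ := hx'
      refine ⟨b.map (emb2 i n h), ?_, ?_⟩
      · exact mem_union_right _ (mem_image_of_mem _ hb)
      · simp only [id_eq, Finset.mem_map]
        exact ⟨⟨(x : ℕ) - i, hxi⟩, by simpa using hxb, by ext; simp; omega⟩
  bot_notMem := by
    intro hbot
    simp only [bot_eq_empty, mem_union, Finset.mem_image] at hbot
    rcases hbot with ⟨b, hb, hbe⟩ | ⟨b, hb, hbe⟩ <;>
      [exact P.ne_bot hb (Finset.map_eq_empty.1 hbe);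
       exact Q.ne_bot hb (Finset.map_eq_empty.1 hbe)]

lemma mem_glue_parts {i : ℕ} (h : i ≤ n) {P Q} {c : Finset (Fin n)} :
    c ∈ (glue h P Q).parts ↔
      (∃ b ∈ P.parts, c = b.map (Fin.castLEEmb h)) ∨
      (∃ b ∈ Q.parts, c = b.map (emb2 i n h)) := by
  simp [glue, eq_comm]

open scoped Classical in

open scoped Classical in
noncomputable def split1 {i : ℕ} (h : i ≤ n) (P : Finpartition (Finset.univ : Finset (Fin n)))
    (hP : IsBreak P i) : Finpartition (Finset.univ : Finset (Fin i)) where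
  parts := (P.parts.filter fun b => ∀ x ∈ b, x.val < i).image
    (fun b => b.preimage (Fin.castLEEmb h) (Fin.castLEEmb h).injective.injOn)
  supIndep := by
    rw [Finset.supIndep_iff_pairwiseDisjoint]
    intro c₁ h₁ c₂ h₂ hne
    simp only [coe_image, Set.mem_image, mem_coe, mem_filter] at h₁ h₂
    obtain ⟨b₁, ⟨hb₁, hlt₁⟩, rfl⟩ := h₁
    obtain ⟨b₂, ⟨hb₂, hlt₂⟩, rfl⟩ := h₂
    have hbne : b₁ ≠ b₂ := fun e => hne (by rw [e])
    have hd := P.disjoint hb₁ hb₂ hbne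
    rw [Function.onFun, Finset.disjoint_left]
    simp only [id_eq, Finset.mem_preimage]
    intro a ha ha'
    exact (Finset.disjoint_left.1 hd) ha ha'
  sup_parts := by
    apply Finset.Subset.antisymm (fun x _ => mem_univ x)
    intro y _
    rw [Finset.mem_sup]
    have hy : (Fin.castLEEmb h y) ∈ (Finset.univ : Finset (Fin n)) := mem_univ _
    rw [← P.sup_parts, Finset.mem_sup] at hy
    obtain ⟨b, hb, hyb⟩ := hy
    simp only [id_eq] at hyb
    have hblt : ∀ x ∈ b, x.val < i := by
      rcases hP b hb with hc | hc
      · exact hc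
      · exact absurd (by simpa using y.isLt) (by simpa using hc _ hyb)
    refine ⟨b.preimage (Fin.castLEEmb h) (Fin.castLEEmb h).injective.injOn, ?_, ?_⟩
    · exact mem_image_of_mem _ (mem_filter.2 ⟨hb, hblt⟩)
    · simpa [Finset.mem_preimage] using hyb
  bot_notMem := by
    intro hbot
    simp only [bot_eq_empty, Finset.mem_image] at hbot
    obtain ⟨b, hb, hbe⟩ := hbot
    rw [mem_filter] at hb
    obtain ⟨x, hx⟩ := Finset.nonempty_iff_ne_empty.2 (P.ne_bot hb.1)
    have hxi : (x : ℕ) < i := hb.2 x hx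
    have hmem : (⟨(x : ℕ), hxi⟩ : Fin i) ∈
        b.preimage (Fin.castLEEmb h) (Fin.castLEEmb h).injective.injOn := by
      rw [Finset.mem_preimage]
      have : Fin.castLEEmb h ⟨(x : ℕ), hxi⟩ = x := by ext; simp
      rwa [this]
    rw [hbe] at hmem
    exact absurd hmem (Finset.notMem_empty _)


noncomputable def split2 {i : ℕ} (h : i ≤ n) (P : Finpartition (Finset.univ : Finset (Fin n)))
    (hP : IsBreak P i) : Finpartition (Finset.univ : Finset (Fin (n - i)))  where
  parts := (P.parts.filter fun b => ∀ x ∈ b, ¬ x.val < i).image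
    (fun b => b.preimage (emb2 i n h) (emb2 i n h).injective.injOn)
  supIndep := by
    rw [Finset.supIndep_iff_pairwiseDisjoint]
    intro c₁ h₁ c₂ h₂ hne
    simp only [coe_image, Set.mem_image, mem_coe, mem_filter] at h₁ h₂
    obtain ⟨b₁, ⟨hb₁, hlt₁⟩, rfl⟩ := h₁
    obtain ⟨b₂, ⟨hb₂, hlt₂⟩, rfl⟩ := h₂
    have hbne : b₁ ≠ b₂ := fun e => hne (by rw [e])
    have hd := P.disjoint hb₁ hb₂ hbne
    rw [Function.onFun, Finset.disjoint_left]
    simp only [id_eq, Finset.mem_preimage]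
    intro a ha ha'
    exact (Finset.disjoint_left.1 hd) ha ha'
  sup_parts := by
    apply Finset.Subset.antisymm (fun x _ => mem_univ x)
    intro y _
    rw [Finset.mem_sup]
    have hy : (emb2 i n h y) ∈ (Finset.univ : Finset (Fin n)) := mem_univ _
    rw [← P.sup_parts, Finset.mem_sup] at hy
    obtain ⟨b, hb, hyb⟩ := hy
    simp only [id_eq] at hyb
    have hblt : ∀ x ∈ b, ¬ x.val < i := by
      rcases hP b hb with hc | hc
      · exact absurd (hc _ hyb) (by simp)
      · exact hc
    refine ⟨b.preimage (emb2 i n h) (emb2 i n h).injective.injOn, ?_, ?_⟩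
    · exact mem_image_of_mem _ (mem_filter.2 ⟨hb, hblt⟩)
    · simpa [Finset.mem_preimage] using hyb
  bot_notMem := by
    intro hbot
    simp only [bot_eq_empty, Finset.mem_image] at hbot
    obtain ⟨b, hb, hbe⟩ := hbot
    rw [mem_filter] at hb
    obtain ⟨x, hx⟩ := Finset.nonempty_iff_ne_empty.2 (P.ne_bot hb.1)
    have hxge : i ≤ (x : ℕ) := Nat.le_of_not_lt (hb.2 x hx)
    have hxi : (x : ℕ) - i < n - i := by have := x.isLt; omega
    have hmem : (⟨(x : ℕ) - i, hxi⟩ : Fin (n - i)) ∈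
        b.preimage (emb2 i n h) (emb2 i n h).injective.injOn := by
      rw [Finset.mem_preimage]
      have : emb2 i n h ⟨(x : ℕ) - i, hxi⟩ = x := by
        ext
        simp only [emb2_val]
        omega
      rwa [this]
    rw [hbe] at hmem
    exact absurd hmem (Finset.notMem_empty _)

lemma isBreak_glue {i : ℕ} (h : i ≤ n) (P : Finpartition (Finset.univ : Finset (Fin i)))
    (Q : Finpartition (Finset.univ : Finset (Fin (n - i)))) : IsBreak (glue h P Q) i := by
  intro c hc
  rw [mem_glue_parts] at hc
  rcases hc with ⟨b, hb, rfl⟩ | ⟨b, hb, rfl⟩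
  · left
    intro x hx
    rw [Finset.mem_map] at hx
    obtain ⟨y, hy, rfl⟩ := hx
    simpa using y.isLt
  · right
    intro x hx
    rw [Finset.mem_map] at hx
    obtain ⟨y, hy, rfl⟩ := hx
    simp

lemma isBreak_glue_iff {i j : ℕ} (h : i ≤ n) (hj : j ≤ i)
    (P : Finpartition (Finset.univ : Finset (Fin i)))
    (Q : Finpartition (Finset.univ : Finset (Fin (n - i)))) :
    IsBreak (glue h P Q) j ↔ IsBreak P j := by
  constructor
  · intro hB b hb
    have := hB (b.map (Fin.castLEEmb h)) (by rw [mem_glue_parts]; exact Or.inl ⟨b, hb, rfl⟩)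
    rcases this with hc | hc
    · left
      intro x hx
      have := hc (Fin.castLEEmb h x) (Finset.mem_map_of_mem _ hx)
      simpa using this
    · right
      intro x hx
      have := hc (Fin.castLEEmb h x) (Finset.mem_map_of_mem _ hx)
      simpa using this
  · intro hB c hc
    rw [mem_glue_parts] at hc
    rcases hc with ⟨b, hb, rfl⟩ | ⟨b, hb, rfl⟩
    · rcases hB b hb with hc | hc
      · left
        intro x hx
        rw [Finset.mem_map] at hx
        obtain ⟨y, hy, rfl⟩ := hx
        simpa using hc y hy
      · right
        intro x hx
        rw [Finset.mem_map] at hx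
        obtain ⟨y, hy, rfl⟩ := hx
        simpa using hc y hy
    · right
      intro x hx
      rw [Finset.mem_map] at hx
      obtain ⟨y, hy, rfl⟩ := hx
      simp only [emb2_val]
      omega

lemma map_preimage_of_range {α β : Type*} [DecidableEq α] [DecidableEq β] {f : α ↪ β}
    {s : Finset β} (hs : ∀ x ∈ s, ∃ y, f y = x) :
    (s.preimage f f.injective.injOn).map f = s := by
  ext x
  simp only [Finset.mem_map, Finset.mem_preimage]
  constructor
  · rintro ⟨y, hy, rfl⟩; exact hy
  · intro hx
    obtain ⟨y, rfl⟩ := hs x hx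
    exact ⟨y, hx, rfl⟩

lemma mem_split1_parts {i : ℕ} {h : i ≤ n} {P : Finpartition (Finset.univ : Finset (Fin n))}
    {hP : IsBreak P i} {c : Finset (Fin i)} :
    c ∈ (split1 h P hP).parts ↔ c.map (Fin.castLEEmb h) ∈ P.parts := by
  constructor
  · intro hc
    simp only [split1, Finset.mem_image, mem_filter] at hc
    obtain ⟨b, ⟨hb, hlt⟩, rfl⟩ := hc
    rwa [map_preimage_of_range (fun x hx => ⟨⟨(x : ℕ), hlt x hx⟩, by ext; simp⟩)]
  · intro hc
    simp only [split1, Finset.mem_image, mem_filter]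
    refine ⟨c.map (Fin.castLEEmb h), ⟨hc, ?_⟩, ?_⟩
    · intro x hx
      rw [Finset.mem_map] at hx
      obtain ⟨y, hy, rfl⟩ := hx
      simpa using y.isLt
    · rw [Finset.preimage_map]

lemma mem_split2_parts {i : ℕ} {h : i ≤ n} {P : Finpartition (Finset.univ : Finset (Fin n))}
    {hP : IsBreak P i} {c : Finset (Fin (n - i))} :
    c ∈ (split2 h P hP).parts ↔ c.map (emb2 i n h) ∈ P.parts := by
  constructor
  · intro hc
    simp only [split2, Finset.mem_image, mem_filter] at hc
    obtain ⟨b, ⟨hb, hlt⟩, rfl⟩ := hc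
    rwa [map_preimage_of_range (fun x hx => by
      have h1 := Nat.le_of_not_lt (hlt x hx)
      have h2 := x.isLt
      exact ⟨⟨(x : ℕ) - i, by omega⟩, by ext; simp only [emb2_val]; omega⟩)]
  · intro hc
    simp only [split2, Finset.mem_image, mem_filter]
    refine ⟨c.map (emb2 i n h), ⟨hc, ?_⟩, ?_⟩
    · intro x hx
      rw [Finset.mem_map] at hx
      obtain ⟨y, hy, rfl⟩ := hx
      simp
    · rw [Finset.preimage_map]

lemma glue_split {i : ℕ} (h : i ≤ n) (P : Finpartition (Finset.univ : Finset (Fin n)))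
    (hP : IsBreak P i) : glue h (split1 h P hP) (split2 h P hP) = P := by
  ext c
  rw [mem_glue_parts]
  constructor
  · rintro (⟨b, hb, rfl⟩ | ⟨b, hb, rfl⟩)
    · exact mem_split1_parts.1 hb
    · exact mem_split2_parts.1 hb
  · intro hc
    rcases hP c hc with hlt | hge
    · left
      refine ⟨c.preimage (Fin.castLEEmb h) (Fin.castLEEmb h).injective.injOn, ?_, ?_⟩
      · rw [mem_split1_parts, map_preimage_of_range (fun x hx => ⟨⟨(x : ℕ), hlt x hx⟩, by ext; simp⟩)]
        exact hc
      · rw [map_preimage_of_range (fun x hx => ⟨⟨(x : ℕ), hlt x hx⟩, by ext; simp⟩)]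
    · right
      have hrange : ∀ x ∈ c, ∃ y, emb2 i n h y = x := fun x hx => by
        have h1 := Nat.le_of_not_lt (hge x hx)
        have h2 := x.isLt
        exact ⟨⟨(x : ℕ) - i, by omega⟩, by ext; simp only [emb2_val]; omega⟩
      refine ⟨c.preimage (emb2 i n h) (emb2 i n h).injective.injOn, ?_, ?_⟩
      · rw [mem_split2_parts, map_preimage_of_range hrange]
        exact hc
      · rw [map_preimage_of_range hrange]

lemma split1_glue {i : ℕ} (h : i ≤ n) (P : Finpartition (Finset.univ : Finset (Fin i)))
    (Q : Finpartition (Finset.univ : Finset (Fin (n - i)))) (hB : IsBreak (glue h P Q) i) :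
    split1 h (glue h P Q) hB = P := by
  ext c
  rw [mem_split1_parts, mem_glue_parts]
  constructor
  · rintro (⟨b, hb, he⟩ | ⟨b, hb, he⟩)
    · rwa [Finset.map_injective _ he]
    · exfalso
      obtain ⟨x, hx⟩ := Finset.nonempty_iff_ne_empty.2 (Q.ne_bot hb)
      have hmem : emb2 i n h x ∈ c.map (Fin.castLEEmb h) := by
        rw [he]; exact Finset.mem_map_of_mem _ hx
      rw [Finset.mem_map] at hmem
      obtain ⟨y, _, hy⟩ := hmem
      have h1 : ((Fin.castLEEmb h) y).val < i := by simpa using y.isLt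
      rw [hy] at h1
      simp only [emb2_val] at h1
      omega
  · intro hc
    exact Or.inl ⟨c, hc, rfl⟩

lemma split2_glue {i : ℕ} (h : i ≤ n) (P : Finpartition (Finset.univ : Finset (Fin i)))
    (Q : Finpartition (Finset.univ : Finset (Fin (n - i)))) (hB : IsBreak (glue h P Q) i) :
    split2 h (glue h P Q) hB = Q := by
  ext c
  rw [mem_split2_parts, mem_glue_parts]
  constructor
  · rintro (⟨b, hb, he⟩ | ⟨b, hb, he⟩)
    · exfalso
      obtain ⟨x, hx⟩ := Finset.nonempty_iff_ne_empty.2 (P.ne_bot hb)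
      have hmem : Fin.castLEEmb h x ∈ c.map (emb2 i n h) := by
        rw [he]; exact Finset.mem_map_of_mem _ hx
      rw [Finset.mem_map] at hmem
      obtain ⟨y, _, hy⟩ := hmem
      have h1 : ((emb2 i n h) y).val ≥ i := by simp
      rw [hy] at h1
      have h2 : ((Fin.castLEEmb h) x).val < i := by simpa using x.isLt
      omega
    · rwa [Finset.map_injective _ he]
  · intro hc
    exact Or.inr ⟨c, hc, rfl⟩

open scoped Classical

lemma exists_break (hn : 1 ≤ n) (P : Finpartition (Finset.univ : Finset (Fin n))) :
    ∃ j, 1 ≤ j ∧ IsBreak P j := ⟨n, hn, isBreak_top P⟩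

noncomputable def minBreak (hn : 1 ≤ n) (P : Finpartition (Finset.univ : Finset (Fin n))) : ℕ :=
  Nat.find (exists_break hn P)

lemma minBreak_pos (hn : 1 ≤ n) (P) : 1 ≤ minBreak hn P :=
  (Nat.find_spec (exists_break hn P)).1

lemma minBreak_isBreak (hn : 1 ≤ n) (P) : IsBreak P (minBreak hn P) :=
  (Nat.find_spec (exists_break hn P)).2

lemma minBreak_le (hn : 1 ≤ n) (P) : minBreak hn P ≤ n :=
  Nat.find_min' _ ⟨hn, isBreak_top P⟩

lemma minBreak_min (hn : 1 ≤ n) (P) {j : ℕ} (h1 : 1 ≤ j) (hj : IsBreak P j) :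
    minBreak hn P ≤ j :=
  Nat.find_min' _ ⟨h1, hj⟩

/-- helper for rewriting split1 along an equality of partitions -/
lemma split1_congr {i : ℕ} (h : i ≤ n) {P P' : Finpartition (Finset.univ : Finset (Fin n))}
    (e : P = P') (hP : IsBreak P i) (hP' : IsBreak P' i) : split1 h P hP = split1 h P' hP' := by
  subst e; rfl

lemma split2_congr {i : ℕ} (h : i ≤ n) {P P' : Finpartition (Finset.univ : Finset (Fin n))}
    (e : P = P') (hP : IsBreak P i) (hP' : IsBreak P' i) : split2 h P hP = split2 h P' hP' := by
  subst e; rfl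

/-- The right-hand-side space for the Bell recurrence. -/
noncomputable abbrev RHS (n : ℕ) : Type :=
  Σ i : Fin n, {Q : Finpartition (Finset.univ : Finset (Fin (i.val + 1))) // Q.Atomic} ×
    Finpartition (Finset.univ : Finset (Fin (n - (i.val + 1))))

noncomputable def G (n : ℕ) : RHS n → Finpartition (Finset.univ : Finset (Fin n)) :=
  fun x => glue (Nat.succ_le_of_lt x.1.isLt) x.2.1.1 x.2.2

lemma minBreak_glue' (hn : 1 ≤ n) (i : Fin n)
    (Q : Finpartition (Finset.univ : Finset (Fin (i.val + 1)))) (hQ : Q.Atomic)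
    (R : Finpartition (Finset.univ : Finset (Fin (n - (i.val + 1))))) :
    minBreak hn (glue (Nat.succ_le_of_lt i.isLt) Q R) = i.val + 1 := by
  apply le_antisymm
  · exact minBreak_min hn _ (by omega) (isBreak_glue _ _ _)
  · by_contra hlt
    push_neg at hlt
    set m := minBreak hn (glue (Nat.succ_le_of_lt i.isLt) Q R) with hm
    have h1 : 1 ≤ m := minBreak_pos hn _
    have hB : IsBreak (glue (Nat.succ_le_of_lt i.isLt) Q R) m := minBreak_isBreak hn _
    have hQ' : IsBreak Q m := by
      rw [isBreak_glue_iff (Nat.succ_le_of_lt i.isLt) (by omega)] at hB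
      exact hB
    exact (atomic_iff.1 hQ) m h1 (by omega) hQ'

lemma minBreak_G (hn : 1 ≤ n) (x : RHS n) : minBreak hn (G n x) = x.1.val + 1 := by
  obtain ⟨i, Q, R⟩ := x
  exact minBreak_glue' hn i Q.1 Q.2 R

lemma G_injective (hn : 1 ≤ n) : Function.Injective (G n) := by
  rintro ⟨i, Q, R⟩ ⟨i', Q', R'⟩ hEq
  have hi : i = i' := by
    have h1 := minBreak_glue' hn i Q.1 Q.2 R
    have h2 := minBreak_glue' hn i' Q'.1 Q'.2 R'
    rw [show glue (Nat.succ_le_of_lt i.isLt) Q.1 R = glue (Nat.succ_le_of_lt i'.isLt) Q'.1 R' from hEq, h2] at h1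
    exact Fin.ext (by omega)
  subst hi
  have e1 : glue (Nat.succ_le_of_lt i.isLt) Q.1 R = glue (Nat.succ_le_of_lt i.isLt) Q'.1 R' := hEq
  have hQ : Q.1 = Q'.1 := by
    rw [← split1_glue (Nat.succ_le_of_lt i.isLt) Q.1 R (isBreak_glue _ _ _),
        ← split1_glue (Nat.succ_le_of_lt i.isLt) Q'.1 R' (isBreak_glue _ _ _)]
    exact split1_congr _ e1 _ _
  have hR : R = R' := by
    rw [← split2_glue (Nat.succ_le_of_lt i.isLt) Q.1 R (isBreak_glue _ _ _),
        ← split2_glue (Nat.succ_le_of_lt i.isLt) Q'.1 R' (isBreak_glue _ _ _)]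
    exact split2_congr _ e1 _ _
  have hQ' : Q = Q' := Subtype.ext hQ
  rw [hQ', hR]

lemma G_surjective (hn : 1 ≤ n) : Function.Surjective (G n) := by
  intro P
  set m := minBreak hn P with hm
  have h1 : 1 ≤ m := minBreak_pos hn P
  have hmn : m ≤ n := minBreak_le hn P
  set i : Fin n := ⟨m - 1, by omega⟩ with hi
  have hiv : i.val + 1 = m := by simp [hi]; omega
  have h' : i.val + 1 ≤ n := Nat.succ_le_of_lt i.isLt
  have hB : IsBreak P (i.val + 1) := by rw [hiv]; exact minBreak_isBreak hn P
  have hAtom : (split1 h' P hB).Atomic := by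
    rw [atomic_iff]
    intro j hj1 hj2 hjB
    have hPj : IsBreak P j := by
      rw [← glue_split h' P hB, isBreak_glue_iff h' (by omega)]
      exact hjB
    have := minBreak_min hn P hj1 hPj
    omega
  exact ⟨⟨i, ⟨split1 h' P hB, hAtom⟩, split2 h' P hB⟩, glue_split h' P hB⟩

set_option maxHeartbeats 2000000 in
lemma bell_rec (hn : 1 ≤ n) :
    bellNumber n = ∑ i : Fin n,
      numAtomicPartitions (i.val + 1) * bellNumber (n - (i.val + 1)) := by
  have hb : Function.Bijective (G n) := ⟨G_injective hn, G_surjective hn⟩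
  have h1 : Nat.card (RHS n) = bellNumber n := Nat.card_eq_of_bijective _ hb
  rw [← h1, Nat.card_eq_fintype_card, Fintype.card_sigma]
  refine Finset.sum_congr rfl fun i _ => ?_
  rw [Fintype.card_prod, numAtomicPartitions, bellNumber,
    Nat.card_eq_fintype_card, Nat.card_eq_fintype_card]

/-- The composition-side map. -/
def F (n : ℕ) : (Σ i : Fin n, Composition (n - (i.val + 1))) → Composition n :=
  fun x => ⟨(x.1.val + 1) :: x.2.blocks, by
      intro j hj
      rcases List.mem_cons.1 hj with rfl | h
      · omega
      · exact x.2.blocks_pos h, by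
      have hle : x.1.val + 1 ≤ n := Nat.succ_le_of_lt x.1.isLt
      have := x.2.blocks_sum
      simp only [List.sum_cons, this]
      omega⟩

lemma F_injective : Function.Injective (F n) := by
  rintro ⟨i, β⟩ ⟨i', β'⟩ hEq
  have hbl : (i.val + 1) :: β.blocks = (i'.val + 1) :: β'.blocks :=
    congrArg Composition.blocks hEq
  have hi : i = i' := Fin.ext (by injection hbl with h1 _; omega)
  subst hi
  have : β = β' := Composition.ext (by injection hbl)
  rw [this]

lemma F_surjective (hn : 1 ≤ n) : Function.Surjective (F n) := by
  intro α
  have hne : α.blocks ≠ [] := by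
    intro h
    have := α.blocks_sum
    rw [h] at this
    simp at this
    omega
  obtain ⟨a, t, hat⟩ := List.exists_cons_of_ne_nil hne
  have ha : 0 < a := α.blocks_pos (by rw [hat]; exact List.mem_cons_self)
  have hsum : a + t.sum = n := by
    have := α.blocks_sum
    rwa [hat, List.sum_cons] at this
  have han : a ≤ n := by omega
  refine ⟨⟨⟨a - 1, by omega⟩, ⟨t, fun h => α.blocks_pos (by rw [hat]; exact List.mem_cons_of_mem _ h), by simp; omega⟩⟩, ?_⟩
  apply Composition.ext
  simp [F, hat]
  omega

lemma comp_rec (hn : 1 ≤ n) :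
    (∑ α : Composition n, (α.blocks.map numAtomicPartitions).prod) =
      ∑ i : Fin n, numAtomicPartitions (i.val + 1) *
        ∑ β : Composition (n - (i.val + 1)), (β.blocks.map numAtomicPartitions).prod := by
  have hb : Function.Bijective (F n) := ⟨F_injective, F_surjective hn⟩
  rw [← Fintype.sum_bijective (F n) hb
    (fun x => ((F n x).blocks.map numAtomicPartitions).prod) _ (fun x => rfl)]
  rw [← Finset.univ_sigma_univ, Finset.sum_sigma]
  refine Finset.sum_congr rfl fun i _ => ?_
  rw [Finset.mul_sum]
  refine Finset.sum_congr rfl fun β _ => ?_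
  simp [F]

lemma bell_zero : bellNumber 0 = 1 := by
  haveI : Unique (Finpartition (Finset.univ : Finset (Fin 0))) := by
    rw [show (Finset.univ : Finset (Fin 0)) = ⊥ from by simp]
    infer_instance
  rw [bellNumber, Nat.card_unique]

lemma comp_zero : (∑ α : Composition 0, (α.blocks.map numAtomicPartitions).prod) = 1 := by
  have h : ∀ α : Composition 0, α.blocks = [] := by
    intro α
    cases hb : α.blocks with
    | nil => rfl
    | cons a t =>
      have hs := α.blocks_sum
      rw [hb, List.sum_cons] at hs
      have := α.blocks_pos (by rw [hb]; exact List.mem_cons_self)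
      omega
  calc (∑ α : Composition 0, (α.blocks.map numAtomicPartitions).prod)
      = ∑ _α : Composition 0, 1 := Finset.sum_congr rfl fun α _ => by rw [h α]; simp
    _ = Fintype.card (Composition 0) := by simp
    _ = 1 := by rw [composition_card]; norm_num

theorem key : ∀ n : ℕ,
    bellNumber n = ∑ α : Composition n, (α.blocks.map numAtomicPartitions).prod := by
  intro n
  induction n using Nat.strong_induction_on with
  | _ n ih =>
    rcases Nat.eq_zero_or_pos n with rfl | hn
    · rw [bell_zero, comp_zero]
    · rw [bell_rec hn, comp_rec hn]
      refine Finset.sum_congr rfl fun i _ => ?_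
      rw [ih (n - (i.val + 1)) (by have := i.isLt; omega)]

end AtomicBell

/-- `B_n = ∑_{α ⊨ n} d_α`, where `B_n` is the Bell number, `d_k` is
the number of atomic partitions of `{1, …, k}` and the sum is over all compositions
of `n`. -/
theorem bell_eq_sum_compositions_atomic (n : ℕ) (hn : 1 ≤ n) :
    bellNumber n = ∑ α : Composition n, (α.blocks.map numAtomicPartitions).prod :=
  AtomicBell.key n
end
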